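/- arXiv:2403.00715 — 9 statements merged into one kernel-verified Lean document; each statement's English description precedes it below -/
import Mathlib

section
/- Let z_1,...,z_T ≥ 0 and h_1,...,h_T > 0, and let G(z,h) = Σ_{t=1}^T z_t·(Σ_{s=1}^t z_s/h_s)^{-1/2}. Let θ_0 > θ_1 > ... > θ_J > 0 be a decreasing positive sequence with θ_0 ≥ max_t h_t. Define T_j = {t ∈ [T] : θ_{j-1} ≥ h_t > θ_j} for j ∈ [J] and T_{J+1} = {t ∈ [T] : θ_J ≥ h_t}. Then G(z,h) ≤ 2·Σ_{j=1}^{J+1} sqrt( θ_{j-1}·Σ_{t ∈ T_j} z_t ). -/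
open Finset Real

private lemma head_bound {b F : ℝ} (hb : 0 ≤ b) (hF : 0 ≤ F) :
    b / Real.sqrt (b + F) ≤ 2 * (Real.sqrt (b + F) - Real.sqrt F) := by
  rcases eq_or_lt_of_le (by positivity : (0:ℝ) ≤ b + F) with h | h
  · have hb0 : b = 0 := by linarith [hb, hF]
    have hF0 : F = 0 := by linarith
    simp [hb0, hF0]
  · have hs : 0 < Real.sqrt (b + F) := Real.sqrt_pos.2 h
    rw [div_le_iff₀ hs]
    have h1 : Real.sqrt (b + F) ^ 2 = b + F := Real.sq_sqrt h.le
    have h2 : Real.sqrt F ^ 2 = F := Real.sq_sqrt hF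
    nlinarith [two_mul_le_add_sq (Real.sqrt F) (Real.sqrt (b + F))]

private lemma telescope_sqrt (s : Finset ℕ) (f : ℕ → ℝ) (hf : ∀ t ∈ s, 0 ≤ f t) :
    ∑ t ∈ s, f t / Real.sqrt (∑ u ∈ s.filter (· ≤ t), f u)
      ≤ 2 * Real.sqrt (∑ t ∈ s, f t) := by
  induction s using Finset.induction_on_max with
  | empty => simp
  | insert a s hmax ih =>
    have ha : a ∉ s := fun h => lt_irrefl a (hmax a h)
    have hfa : 0 ≤ f a := hf a (mem_insert_self _ _)
    have hfs : ∀ t ∈ s, 0 ≤ f t := fun t ht => hf t (mem_insert_of_mem ht)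
    have hFnn : 0 ≤ ∑ t ∈ s, f t := Finset.sum_nonneg hfs
    rw [Finset.sum_insert ha, Finset.sum_insert ha]
    have hfilta : (insert a s).filter (· ≤ a) = insert a s := by
      apply Finset.filter_true_of_mem
      intro x hx
      rcases Finset.mem_insert.1 hx with rfl | hx
      · exact le_refl x
      · exact (hmax x hx).le
    have hfilt : ∀ t ∈ s, (insert a s).filter (· ≤ t) = s.filter (· ≤ t) := by
      intro t ht
      rw [Finset.filter_insert, if_neg (not_le.2 (hmax t ht))]
    have htail : ∑ t ∈ s, f t / Real.sqrt (∑ u ∈ (insert a s).filter (· ≤ t), f u)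
        = ∑ t ∈ s, f t / Real.sqrt (∑ u ∈ s.filter (· ≤ t), f u) := by
      apply Finset.sum_congr rfl
      intro t ht; rw [hfilt t ht]
    rw [htail, hfilta, Finset.sum_insert ha]
    have h1 := head_bound hfa hFnn
    have h2 := ih hfs
    linarith

/-- Bound on `G(z, h) = ∑ z t (∑_{s ≤ t} z s / h s)^{-1/2}` by a sum over dyadic-type
levels `θ 0 > θ 1 > ⋯ > θ J > 0` with `θ 0 ≥ max_t h t`. -/
theorem stmt3 (T J : ℕ) (z h θ : ℕ → ℝ)
    (hz : ∀ t, 1 ≤ t → t ≤ T → 0 ≤ z t)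
    (hh : ∀ t, 1 ≤ t → t ≤ T → 0 < h t)
    (hθJ : 0 < θ J)
    (hθdec : ∀ j, j < J → θ (j + 1) < θ j)
    (hθ0 : ∀ t, 1 ≤ t → t ≤ T → h t ≤ θ 0) :
    (∑ t ∈ Finset.Icc 1 T, z t / Real.sqrt (∑ s ∈ Finset.Icc 1 t, z s / h s))
      ≤ 2 * ∑ j ∈ Finset.Icc 1 (J + 1),
          Real.sqrt (θ (j - 1) *
            ∑ t ∈ (Finset.Icc 1 T).filter
              (fun t => h t ≤ θ (j - 1) ∧ (j = J + 1 ∨ θ j < h t)), z t) := by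
  classical
  -- monotonicity of θ on [0, J]
  have hθmono : ∀ i j : ℕ, i ≤ j → j ≤ J → θ j ≤ θ i := by
    intro i j hij hjJ
    induction j with
    | zero => simp_all
    | succ k ih =>
      rcases Nat.eq_or_lt_of_le hij with rfl | hlt
      · exact le_refl _
      · have : θ (k + 1) < θ k := hθdec k (Nat.lt_of_succ_le hjJ)
        exact le_trans this.le (ih (Nat.lt_succ_iff.1 hlt) (Nat.le_of_succ_le hjJ))
  have hθpos : ∀ j ≤ J, 0 < θ j := fun j hj => lt_of_lt_of_le hθJ (hθmono j J hj le_rfl)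
  set Tj : ℕ → Finset ℕ := fun j => (Finset.Icc 1 T).filter
      (fun t => h t ≤ θ (j - 1) ∧ (j = J + 1 ∨ θ j < h t)) with hTj
  set g : ℕ → ℝ := fun t => z t / Real.sqrt (∑ s ∈ Finset.Icc 1 t, z s / h s) with hg
  have hgnn : ∀ t ∈ Finset.Icc 1 T, 0 ≤ g t := by
    intro t ht
    rw [Finset.mem_Icc] at ht
    exact div_nonneg (hz t ht.1 ht.2) (Real.sqrt_nonneg _)
  -- covering
  have hcover : Finset.Icc 1 T ⊆ (Finset.Icc 1 (J + 1)).biUnion Tj := by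
    intro t ht
    rw [Finset.mem_Icc] at ht
    rw [Finset.mem_biUnion]
    by_cases hJt : h t ≤ θ J
    · exact ⟨J + 1, Finset.mem_Icc.2 ⟨Nat.le_add_left 1 J, le_rfl⟩,
        Finset.mem_filter.2 ⟨Finset.mem_Icc.2 ht, by simpa using hJt, Or.inl rfl⟩⟩
    · push_neg at hJt
      have hex : ∃ j, θ j < h t := ⟨J, hJt⟩
      set j := Nat.find hex with hj
      have hjspec : θ j < h t := Nat.find_spec hex
      have hj1 : 1 ≤ j := by
        rcases Nat.eq_zero_or_pos j with h0 | h1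
        · exfalso; rw [h0] at hjspec; exact absurd (hθ0 t ht.1 ht.2) (not_le.2 hjspec)
        · exact h1
      have hjJ : j ≤ J := Nat.find_le hJt
      have hjm : h t ≤ θ (j - 1) := by
        have := Nat.find_min hex (m := j - 1) (by omega)
        push_neg at this; exact this
      exact ⟨j, Finset.mem_Icc.2 ⟨hj1, by omega⟩,
        Finset.mem_filter.2 ⟨Finset.mem_Icc.2 ht, hjm, Or.inr hjspec⟩⟩
  -- disjointness
  have hkey : ∀ j₁ j₂ : ℕ, 1 ≤ j₁ → j₂ ≤ J + 1 → j₁ < j₂ → Disjoint (Tj j₁) (Tj j₂) := by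
    intro j₁ j₂ hj₁ hj₂ hlt
    rw [Finset.disjoint_left]
    intro t ht1 ht2
    rw [hTj, Finset.mem_filter] at ht1 ht2
    obtain ⟨-, h1a, h1b⟩ := ht1
    obtain ⟨-, h2a, -⟩ := ht2
    have hθlt : θ j₁ < h t := by
      rcases h1b with rfl | hb
      · omega
      · exact hb
    have : θ (j₂ - 1) ≤ θ j₁ := hθmono j₁ (j₂ - 1) (by omega) (by omega)
    linarith
  have hdisj : (↑(Finset.Icc 1 (J + 1)) : Set ℕ).PairwiseDisjoint Tj := by
    intro j₁ hj₁ j₂ hj₂ hne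
    simp only [Finset.coe_Icc, Set.mem_Icc] at hj₁ hj₂
    rcases lt_or_gt_of_ne hne with hlt | hlt
    · exact hkey j₁ j₂ hj₁.1 hj₂.2 hlt
    · exact (hkey j₂ j₁ hj₂.1 hj₁.2 hlt).symm
  -- covering sum bound
  have step1 : ∑ t ∈ Finset.Icc 1 T, g t
      ≤ ∑ j ∈ Finset.Icc 1 (J + 1), ∑ t ∈ Tj j, g t := by
    rw [← Finset.sum_biUnion hdisj]
    apply Finset.sum_le_sum_of_subset_of_nonneg hcover
    intro t ht _
    rcases Finset.mem_biUnion.1 ht with ⟨j, -, htj⟩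
    exact hgnn t (Finset.mem_filter.1 htj).1
  have step2 : ∀ j ∈ Finset.Icc 1 (J + 1),
      ∑ t ∈ Tj j, g t ≤ 2 * Real.sqrt (θ (j - 1) * ∑ t ∈ Tj j, z t) := by
    intro j hjmem
    rw [Finset.mem_Icc] at hjmem
    have hθ' : 0 < θ (j - 1) := hθpos (j - 1) (by omega)
    have hznnTj : ∀ t ∈ Tj j, 0 ≤ z t := by
      intro t ht
      have := (Finset.mem_filter.1 ht).1
      rw [Finset.mem_Icc] at this
      exact hz t this.1 this.2
    have hpt : ∀ t ∈ Tj j, g t ≤ Real.sqrt (θ (j - 1)) *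
        (z t / Real.sqrt (∑ u ∈ (Tj j).filter (· ≤ t), z u)) := by
      intro t ht
      obtain ⟨htT, hth, -⟩ := Finset.mem_filter.1 ht
      rw [Finset.mem_Icc] at htT
      set A := ∑ u ∈ (Tj j).filter (· ≤ t), z u with hA
      have hAnn : 0 ≤ A := Finset.sum_nonneg fun u hu =>
        hznnTj u (Finset.mem_filter.1 hu).1
      have hztA : z t ≤ A := Finset.single_le_sum
        (fun u hu => hznnTj u (Finset.mem_filter.1 hu).1)
        (Finset.mem_filter.2 ⟨ht, le_refl t⟩)
      rcases eq_or_lt_of_le hAnn with hA0 | hApos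
      · have hzt0 : z t = 0 := le_antisymm (hA0 ▸ hztA) (hz t htT.1 htT.2)
        simp [hg, hzt0]
      · have hS : A / θ (j - 1) ≤ ∑ s ∈ Finset.Icc 1 t, z s / h s := by
          rw [Finset.sum_div]
          calc ∑ u ∈ (Tj j).filter (· ≤ t), z u / θ (j - 1)
              ≤ ∑ u ∈ (Tj j).filter (· ≤ t), z u / h u := by
                apply Finset.sum_le_sum
                intro u hu
                obtain ⟨huTj, hule⟩ := Finset.mem_filter.1 hu
                obtain ⟨huT, huh, -⟩ := Finset.mem_filter.1 huTj
                rw [Finset.mem_Icc] at huT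
                exact div_le_div_of_nonneg_left (hz u huT.1 huT.2) (hh u huT.1 huT.2) huh
            _ ≤ ∑ s ∈ Finset.Icc 1 t, z s / h s := by
                apply Finset.sum_le_sum_of_subset_of_nonneg
                · intro u hu
                  obtain ⟨huTj, hule⟩ := Finset.mem_filter.1 hu
                  obtain ⟨huT, -⟩ := Finset.mem_filter.1 huTj
                  rw [Finset.mem_Icc] at huT ⊢
                  exact ⟨huT.1, hule⟩
                · intro u hu _
                  rw [Finset.mem_Icc] at hu
                  exact div_nonneg (hz u hu.1 (le_trans hu.2 htT.2))
                    (hh u hu.1 (le_trans hu.2 htT.2)).le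
        have hApos' : 0 < A / θ (j - 1) := div_pos hApos hθ'
        have hsq : Real.sqrt (A / θ (j - 1)) ≤ Real.sqrt (∑ s ∈ Finset.Icc 1 t, z s / h s) :=
          Real.sqrt_le_sqrt hS
        have hsqpos : 0 < Real.sqrt (A / θ (j - 1)) := Real.sqrt_pos.2 hApos'
        have h1 : g t ≤ z t / Real.sqrt (A / θ (j - 1)) :=
          div_le_div_of_nonneg_left (hz t htT.1 htT.2) hsqpos hsq
        rw [Real.sqrt_div' A hθ'.le] at h1
        calc g t ≤ z t / (Real.sqrt A / Real.sqrt (θ (j - 1))) := h1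
          _ = Real.sqrt (θ (j - 1)) * (z t / Real.sqrt A) := by
              rw [div_div_eq_mul_div, mul_comm, mul_div_assoc]
    calc ∑ t ∈ Tj j, g t
        ≤ ∑ t ∈ Tj j, Real.sqrt (θ (j - 1)) *
            (z t / Real.sqrt (∑ u ∈ (Tj j).filter (· ≤ t), z u)) :=
          Finset.sum_le_sum hpt
      _ = Real.sqrt (θ (j - 1)) * ∑ t ∈ Tj j,
            z t / Real.sqrt (∑ u ∈ (Tj j).filter (· ≤ t), z u) := by
          rw [Finset.mul_sum]
      _ ≤ Real.sqrt (θ (j - 1)) * (2 * Real.sqrt (∑ t ∈ Tj j, z t)) := by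
          apply mul_le_mul_of_nonneg_left (telescope_sqrt _ _ hznnTj) (Real.sqrt_nonneg _)
      _ = 2 * Real.sqrt (θ (j - 1) * ∑ t ∈ Tj j, z t) := by
          rw [Real.sqrt_mul hθ'.le]; ring
  calc ∑ t ∈ Finset.Icc 1 T, g t
      ≤ ∑ j ∈ Finset.Icc 1 (J + 1), ∑ t ∈ Tj j, g t := step1
    _ ≤ ∑ j ∈ Finset.Icc 1 (J + 1), 2 * Real.sqrt (θ (j - 1) * ∑ t ∈ Tj j, z t) :=
        Finset.sum_le_sum step2
    _ = 2 * ∑ j ∈ Finset.Icc 1 (J + 1), Real.sqrt (θ (j - 1) * ∑ t ∈ Tj j, z t) := by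
        rw [Finset.mul_sum]
end

section
/- Let z_1,...,z_T ≥ 0, let h_1,...,h_T > 0 be monotone non-increasing, and let θ_0 > θ_1 > ... > θ_J > θ_{J+1} = 0 be a decreasing sequence with θ_0 ≥ h_1. Define T_j = {t ∈ [T] : θ_{j-1} ≥ h_t > θ_j}. Then for every monotone non-decreasing sequence 0 ≤ β_1 ≤ β_2 ≤ ... ≤ β_T of positive reals, Σ_{t=1}^T ( z_t/β_t + (β_t − β_{t-1})·h_t ) ≥ 2·Σ_{j=1}^J sqrt( (θ_j − θ_{j+1})·Σ_{t ∈ T_j} z_t ), where β_0 = 0. -/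
open Finset

private lemma amgm_aux (a b : ℝ) (ha : 0 ≤ a) (hb : 0 ≤ b) :
    2 * Real.sqrt (a * b) ≤ a + b := by
  nlinarith [sq_nonneg (Real.sqrt a - Real.sqrt b), Real.sq_sqrt ha, Real.sq_sqrt hb,
    Real.sqrt_mul ha b, Real.sqrt_nonneg a, Real.sqrt_nonneg b]

/-- Lower bound on `F(β; z, h)` for monotone non-increasing positive `h`,
for any monotone non-decreasing positive learning-rate sequence `β`. -/
theorem stmt5 (T J : ℕ) (z h θ β : ℕ → ℝ)
    (hz : ∀ t, 1 ≤ t → t ≤ T → 0 ≤ z t)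
    (hh : ∀ t, 1 ≤ t → t ≤ T → 0 < h t)
    (hhmono : ∀ t' t, 1 ≤ t' → t' ≤ t → t ≤ T → h t ≤ h t')
    (hθdec : ∀ j, j ≤ J → θ (j + 1) < θ j)
    (hθlast : θ (J + 1) = 0)
    (hθ0 : ∀ t, 1 ≤ t → t ≤ T → h t ≤ θ 0)
    (hβ0 : β 0 = 0)
    (hβpos : ∀ t, 1 ≤ t → t ≤ T → 0 < β t)
    (hβmono : ∀ t, 1 ≤ t → t < T → β t ≤ β (t + 1)) :
    2 * (∑ j ∈ Finset.Icc 1 J,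
          Real.sqrt ((θ j - θ (j + 1)) *
            ∑ t ∈ (Finset.Icc 1 T).filter
              (fun t => h t ≤ θ (j - 1) ∧ θ j < h t), z t))
      ≤ ∑ t ∈ Finset.Icc 1 T, (z t / β t + (β t - β (t - 1)) * h t) := by
  classical
  -- θ is antitone on [0, J+1]
  have hθle : ∀ i j, i ≤ j → j ≤ J + 1 → θ j ≤ θ i := by
    intro i j hij hjle
    induction j, hij using Nat.le_induction with
    | base => exact le_refl _
    | succ n hn ih =>
        exact le_trans (hθdec n (by omega)).le (ih (by omega))
  -- β is monotone on [1, T]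
  have hβle : ∀ s t, 1 ≤ s → s ≤ t → t ≤ T → β s ≤ β t := by
    intro s t hs hst htT
    induction t, hst using Nat.le_induction with
    | base => exact le_refl _
    | succ n hn ih =>
        exact le_trans (ih (by omega)) (hβmono n (by omega) (by omega))
  -- the increments of β are nonnegative
  have hβd : ∀ t, 1 ≤ t → t ≤ T → 0 ≤ β t - β (t - 1) := by
    intro t ht htT
    rcases Nat.eq_or_lt_of_le ht with h1 | h2
    · simp only [← h1]
      simp [hβ0, (hβpos 1 le_rfl (by omega)).le]
    · have : β (t - 1) ≤ β t := by
        have := hβmono (t - 1) (by omega) (by omega)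
        have ht1 : t - 1 + 1 = t := by omega
        rwa [ht1] at this
      linarith
  -- telescoping sum of β increments
  have htel : ∀ m, m ≤ T → ∑ t ∈ Icc 1 m, (β t - β (t - 1)) = β m := by
    intro m hm
    induction m with
    | zero => simp [hβ0]
    | succ n ih =>
        rw [Finset.sum_Icc_succ_top (by omega : 1 ≤ n + 1), ih (by omega)]
        simp
  set f : ℕ → ℕ → ℝ := fun j t => min (h t) (θ j) - min (h t) (θ (j + 1)) with hf
  -- each f j t is nonnegative
  have hfnn : ∀ j t, j ≤ J → 1 ≤ t → t ≤ T → 0 ≤ f j t := by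
    intro j t hj ht htT
    have : θ (j + 1) ≤ θ j := (hθdec j hj).le
    have : min (h t) (θ (j + 1)) ≤ min (h t) (θ j) := min_le_min le_rfl this
    simpa [hf] using this
  -- decomposition of h t
  have hsumf : ∀ t, 1 ≤ t → t ≤ T → ∑ j ∈ range (J + 1), f j t = h t := by
    intro t ht htT
    have := Finset.sum_range_sub' (fun j => min (h t) (θ j)) (J + 1)
    simp only [hf]
    rw [this, hθlast]
    rw [min_eq_left (hθ0 t ht htT), min_eq_right (hh t ht htT).le]
    ring
  set C : ℕ → ℝ := fun j => ∑ t ∈ Icc 1 T, (β t - β (t - 1)) * f j t with hC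
  have hCnn : ∀ j, j ≤ J → 0 ≤ C j := by
    intro j hj
    apply Finset.sum_nonneg
    intro t ht
    rw [Finset.mem_Icc] at ht
    exact mul_nonneg (hβd t ht.1 ht.2) (hfnn j t hj ht.1 ht.2)
  -- the h-part of the objective dominates the sum of C j over range (J+1)
  have hBdecomp : ∑ t ∈ Icc 1 T, (β t - β (t - 1)) * h t
      = ∑ j ∈ range (J + 1), C j := by
    rw [Finset.sum_comm' (s := range (J + 1)) (t' := Icc 1 T)
      (s' := fun _ => range (J + 1)) (t := fun _ => Icc 1 T) (by tauto)]
    apply Finset.sum_congr rfl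
    intro t ht
    rw [Finset.mem_Icc] at ht
    rw [← Finset.mul_sum, hsumf t ht.1 ht.2]
  set P : ℕ → ℕ → Prop := fun j t => h t ≤ θ (j - 1) ∧ θ j < h t with hP
  set D : ℕ → ℝ := fun j => ∑ t ∈ (Icc 1 T).filter (fun t => P j t), z t / β t with hD
  -- z-part domination
  have hzterm : ∀ t, 1 ≤ t → t ≤ T → 0 ≤ z t / β t := fun t ht htT =>
    div_nonneg (hz t ht htT) (hβpos t ht htT).le
  have hApart : ∑ j ∈ Icc 1 J, D j ≤ ∑ t ∈ Icc 1 T, z t / β t := by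
    have : ∑ j ∈ Icc 1 J, D j
        = ∑ t ∈ Icc 1 T, ∑ j ∈ Icc 1 J, (if P j t then z t / β t else 0) := by
      rw [Finset.sum_comm]
      apply Finset.sum_congr rfl
      intro j hj
      simp only [hD]
      rw [Finset.sum_filter]
    rw [this]
    apply Finset.sum_le_sum
    intro t ht
    rw [Finset.mem_Icc] at ht
    -- at most one j satisfies P j t
    have hcard : ((Icc 1 J).filter (fun j => P j t)).card ≤ 1 := by
      rw [Finset.card_le_one]
      intro j1 hj1 j2 hj2
      rw [Finset.mem_filter, Finset.mem_Icc] at hj1 hj2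
      by_contra hne
      rcases Nat.lt_or_ge j1 j2 with hlt | hge
      · have : θ (j2 - 1) ≤ θ j1 := hθle j1 (j2 - 1) (by omega) (by omega)
        have := hj1.2.2
        have := hj2.2.1
        linarith
      · have hlt : j2 < j1 := by omega
        have : θ (j1 - 1) ≤ θ j2 := hθle j2 (j1 - 1) (by omega) (by omega)
        have := hj2.2.2
        have := hj1.2.1
        linarith
    calc ∑ j ∈ Icc 1 J, (if P j t then z t / β t else 0)
        = ∑ j ∈ (Icc 1 J).filter (fun j => P j t), z t / β t := by
          rw [Finset.sum_filter]
      _ = ((Icc 1 J).filter (fun j => P j t)).card * (z t / β t) := by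
          rw [Finset.sum_const, nsmul_eq_mul]
      _ ≤ 1 * (z t / β t) := by
          apply mul_le_mul_of_nonneg_right _ (hzterm t ht.1 ht.2)
          exact_mod_cast hcard
      _ = z t / β t := one_mul _
  -- per-j key inequality
  have hkey : ∀ j, j ∈ Icc 1 J →
      2 * Real.sqrt ((θ j - θ (j + 1)) *
        ∑ t ∈ (Icc 1 T).filter (fun t => P j t), z t) ≤ D j + C j := by
    intro j hj
    rw [Finset.mem_Icc] at hj
    have hθd : 0 < θ j - θ (j + 1) := by
      have := hθdec j hj.2; linarith
    by_cases hne : ((Icc 1 T).filter (fun t => P j t)).Nonempty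
    · obtain ⟨m, hmmem, hmmax⟩ := Finset.exists_max_image _ id hne
      rw [Finset.mem_filter, Finset.mem_Icc] at hmmem
      obtain ⟨⟨hm1, hmT⟩, hPm⟩ := hmmem
      set S : ℝ := ∑ t ∈ (Icc 1 T).filter (fun t => P j t), z t with hS
      have hSnn : 0 ≤ S := Finset.sum_nonneg fun t htm => by
        rw [Finset.mem_filter, Finset.mem_Icc] at htm
        exact hz t htm.1.1 htm.1.2
      have hβm : 0 < β m := hβpos m hm1 hmT
      have amgm := amgm_aux (S / β m) (β m * (θ j - θ (j + 1)))
        (div_nonneg hSnn hβm.le) (mul_nonneg hβm.le hθd.le)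
      have heq : S / β m * (β m * (θ j - θ (j + 1))) = (θ j - θ (j + 1)) * S := by
        field_simp
      rw [heq] at amgm
      -- S / β m ≤ D j
      have h1 : S / β m ≤ D j := by
        rw [hS, hD, Finset.sum_div]
        apply Finset.sum_le_sum
        intro t htm
        have htm' := htm
        rw [Finset.mem_filter, Finset.mem_Icc] at htm'
        have htle : t ≤ m := hmmax t htm
        have hβt : 0 < β t := hβpos t htm'.1.1 htm'.1.2
        have : β t ≤ β m := hβle t m htm'.1.1 htle hmT
        exact div_le_div_of_nonneg_left (hz t htm'.1.1 htm'.1.2) hβt this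
          |>.trans_eq rfl
      -- β m * (θ j - θ (j+1)) ≤ C j
      have h2 : β m * (θ j - θ (j + 1)) ≤ C j := by
        have hsub : Icc 1 m ⊆ Icc 1 T := Finset.Icc_subset_Icc le_rfl hmT
        have step1 : ∑ t ∈ Icc 1 m, (β t - β (t - 1)) * f j t ≤ C j := by
          rw [hC]
          apply Finset.sum_le_sum_of_subset_of_nonneg hsub
          intro t htT htm
          rw [Finset.mem_Icc] at htT
          exact mul_nonneg (hβd t htT.1 htT.2) (hfnn j t hj.2 htT.1 htT.2)
        have step2 : ∑ t ∈ Icc 1 m, (β t - β (t - 1)) * f j t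
            = β m * (θ j - θ (j + 1)) := by
          have : ∀ t ∈ Icc 1 m, (β t - β (t - 1)) * f j t
              = (β t - β (t - 1)) * (θ j - θ (j + 1)) := by
            intro t htm
            rw [Finset.mem_Icc] at htm
            have hht : θ j < h t := lt_of_lt_of_le hPm.2
              (hhmono t m htm.1 htm.2 hmT)
            have hθj1 : θ (j + 1) ≤ θ j := (hθdec j hj.2).le
            congr 1
            rw [hf]
            simp only
            rw [min_eq_right hht.le, min_eq_right (le_trans hθj1 hht.le)]
          rw [Finset.sum_congr rfl this, ← Finset.sum_mul, htel m hmT, mul_comm]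
        linarith
      calc 2 * Real.sqrt ((θ j - θ (j + 1)) * S)
          ≤ S / β m + β m * (θ j - θ (j + 1)) := amgm
        _ ≤ D j + C j := add_le_add h1 h2
    · rw [Finset.not_nonempty_iff_eq_empty] at hne
      rw [hne]
      simp only [Finset.sum_empty, mul_zero, Real.sqrt_zero, mul_zero]
      have hDnn : 0 ≤ D j := by
        simp only [hD]; rw [hne]; simp
      linarith [hCnn j hj.2]
  -- assemble
  have hfinal : 2 * (∑ j ∈ Icc 1 J,
      Real.sqrt ((θ j - θ (j + 1)) *
        ∑ t ∈ (Icc 1 T).filter (fun t => P j t), z t))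
      ≤ ∑ j ∈ Icc 1 J, (D j + C j) := by
    rw [Finset.mul_sum]
    exact Finset.sum_le_sum hkey
  have hsplit : ∑ t ∈ Icc 1 T, (z t / β t + (β t - β (t - 1)) * h t)
      = (∑ t ∈ Icc 1 T, z t / β t) + ∑ t ∈ Icc 1 T, (β t - β (t - 1)) * h t :=
    Finset.sum_add_distrib
  have hCsum : ∑ j ∈ Icc 1 J, C j ≤ ∑ t ∈ Icc 1 T, (β t - β (t - 1)) * h t := by
    rw [hBdecomp]
    apply Finset.sum_le_sum_of_subset_of_nonneg
    · intro j hj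
      rw [Finset.mem_Icc] at hj
      rw [Finset.mem_range]
      omega
    · intro j hj _
      rw [Finset.mem_range] at hj
      exact hCnn j (by omega)
  rw [Finset.sum_add_distrib] at hfinal
  calc 2 * (∑ j ∈ Finset.Icc 1 J,
          Real.sqrt ((θ j - θ (j + 1)) *
            ∑ t ∈ (Finset.Icc 1 T).filter
              (fun t => h t ≤ θ (j - 1) ∧ θ j < h t), z t))
      ≤ (∑ j ∈ Icc 1 J, D j) + ∑ j ∈ Icc 1 J, C j := hfinal
    _ ≤ (∑ t ∈ Icc 1 T, z t / β t) + ∑ t ∈ Icc 1 T, (β t - β (t - 1)) * h t :=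
        add_le_add hApart hCsum
    _ = _ := hsplit.symm
end

section
/- For every T ∈ ℕ with T ≥ 2, every ξ ≥ 1, and every β_1 > 0, it holds that max( (1/β_1 + β_1)/2 , sqrt(ξ(T−1)/T) − ξ·β_1/(2·sqrt(T)) ) ≥ sqrt(ξ)·sqrt(T−1)/(sqrt(T) + ξ). -/
/-- Key optimization step in the competitive-ratio lower bound:
for `T ≥ 2`, `ξ ≥ 1`, `β > 0`,
`max ((1/β + β)/2) (sqrt (ξ(T-1)/T) - ξβ/(2 sqrt T)) ≥ sqrt ξ · sqrt (T-1) / (sqrt T + ξ)`. -/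
theorem stmt6 (T : ℕ) (ξ β : ℝ) (hT : 2 ≤ T) (hξ : 1 ≤ ξ) (hβ : 0 < β) :
    Real.sqrt ξ * Real.sqrt ((T : ℝ) - 1) / (Real.sqrt (T : ℝ) + ξ)
      ≤ max ((1 / β + β) / 2)
          (Real.sqrt (ξ * ((T : ℝ) - 1) / (T : ℝ)) - ξ * β / (2 * Real.sqrt (T : ℝ))) := by
  have hT2 : (2 : ℝ) ≤ (T : ℝ) := by exact_mod_cast hT
  have hTpos : (0 : ℝ) < (T : ℝ) := by linarith
  set s := Real.sqrt (T : ℝ) with hs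
  set a := Real.sqrt ξ with ha
  set b := Real.sqrt ((T : ℝ) - 1) with hb
  have hspos : 0 < s := Real.sqrt_pos.mpr hTpos
  have hapos : 0 < a := Real.sqrt_pos.mpr (by linarith)
  have hbpos : 0 < b := Real.sqrt_pos.mpr (by linarith)
  have hs2 : s ^ 2 = (T : ℝ) := Real.sq_sqrt (le_of_lt hTpos)
  have ha2 : a ^ 2 = ξ := Real.sq_sqrt (by linarith)
  have hb2 : b ^ 2 = (T : ℝ) - 1 := Real.sq_sqrt (by linarith)
  have hA : Real.sqrt (ξ * ((T : ℝ) - 1) / (T : ℝ)) = a * b / s := by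
    rw [Real.sqrt_div (mul_nonneg (by linarith) (by linarith)), Real.sqrt_mul (by linarith)]
  by_cases h : a * b / (s + ξ) ≤ β / 2
  · refine le_trans ?_ (le_max_left _ _)
    have : β / 2 ≤ (1 / β + β) / 2 := by
      have : 0 < 1 / β := by positivity
      linarith
    linarith
  · refine le_trans ?_ (le_max_right _ _)
    rw [hA]
    push_neg at h
    have hsξ : 0 < s + ξ := by positivity
    rw [div_lt_div_iff₀ two_pos hsξ] at h
    have hR : a * b / s - ξ * β / (2 * s) = (2 * (a * b) - ξ * β) / (2 * s) := by
      field_simp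
    rw [hR, div_le_div_iff₀ hsξ (by positivity)]
    nlinarith [mul_lt_mul_of_pos_left h (show (0:ℝ) < ξ by linarith)]
end

section
/- Let z_{1:T} and h_{1:T} be two instances with z_1=1, h_1=1 and z_t=0, h_t=ξ for t ≥ 2; and z'_t = 1 for all t with the same h. Then the offline optima satisfy F*(z_{1:T}, h_{1:T}) = 2 and F*(z'_{1:T}, h_{1:T}) ≤ 2·sqrt(T), where F*(z,h) = inf over 0 ≤ β_1 ≤ ... ≤ β_T of Σ_{t=1}^T ( z_t/β_t + (β_t − β_{t-1})·h_t ) with β_0 = 0. -/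
/-- Offline optima for the two instances in the lower-bound proof:
`F*(z, h) = 2` and `F*(z', h) ≤ 2 √T`. -/
theorem stmt7 (T : ℕ) (ξ : ℝ) (hT : 1 ≤ T) (hξ : 1 ≤ ξ)
    (z z' h : ℕ → ℝ)
    (hz1 : z 1 = 1) (hzt : ∀ t, 2 ≤ t → z t = 0)
    (hz' : ∀ t, z' t = 1)
    (hh1 : h 1 = 1) (hht : ∀ t, 2 ≤ t → h t = ξ)
    (Fstar : (ℕ → ℝ) → (ℕ → ℝ) → ℝ)
    (hF : ∀ zz hh, Fstar zz hh = sInf {y : ℝ | ∃ β : ℕ → ℝ, β 0 = 0 ∧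
      (∀ t, 1 ≤ t → t ≤ T → 0 < β t) ∧
      (∀ t, 1 ≤ t → t < T → β t ≤ β (t + 1)) ∧
      y = ∑ t ∈ Finset.Icc 1 T, (zz t / β t + (β t - β (t - 1)) * hh t)}) :
    Fstar z h = 2 ∧ Fstar z' h ≤ 2 * Real.sqrt (T : ℝ) := by
  have hsplit : Finset.Icc 1 T = Finset.cons 1 (Finset.Ioc 1 T) (by simp) :=
    Finset.Icc_eq_cons_Ioc hT
  constructor
  · rw [hF]
    -- lower bound : every element of the set is ≥ 2
    have hlb : ∀ y ∈ {y : ℝ | ∃ β : ℕ → ℝ, β 0 = 0 ∧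
        (∀ t, 1 ≤ t → t ≤ T → 0 < β t) ∧
        (∀ t, 1 ≤ t → t < T → β t ≤ β (t + 1)) ∧
        y = ∑ t ∈ Finset.Icc 1 T, (z t / β t + (β t - β (t - 1)) * h t)},
        (2:ℝ) ≤ y := by
      rintro y ⟨β, hβ0, hβpos, hβmono, rfl⟩
      rw [hsplit, Finset.sum_cons]
      have h1pos : 0 < β 1 := hβpos 1 le_rfl hT
      have hrest : (0:ℝ) ≤ ∑ t ∈ Finset.Ioc 1 T,
          (z t / β t + (β t - β (t - 1)) * h t) := by
        apply Finset.sum_nonneg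
        intro t ht
        rw [Finset.mem_Ioc] at ht
        have h2t : 2 ≤ t := ht.1
        have hmono : β (t - 1) ≤ β t := by
          have := hβmono (t - 1) (by omega) (by omega)
          have heq : t - 1 + 1 = t := by omega
          rwa [heq] at this
        rw [hzt t h2t, hht t h2t, zero_div, zero_add]
        exact mul_nonneg (by linarith) (by linarith)
      have hkey : (2:ℝ) ≤ z 1 / β 1 + (β 1 - β 0) * h 1 := by
        rw [hz1, hh1, hβ0]
        have key : 1 / β 1 + β 1 - 2 = (β 1 - 1)^2 / β 1 := by
          field_simp; ring
        have : (0:ℝ) ≤ (β 1 - 1)^2 / β 1 := by positivity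
        nlinarith
      linarith
    have hmem : (2:ℝ) ∈ {y : ℝ | ∃ β : ℕ → ℝ, β 0 = 0 ∧
        (∀ t, 1 ≤ t → t ≤ T → 0 < β t) ∧
        (∀ t, 1 ≤ t → t < T → β t ≤ β (t + 1)) ∧
        y = ∑ t ∈ Finset.Icc 1 T, (z t / β t + (β t - β (t - 1)) * h t)} := by
      refine ⟨fun t => if t = 0 then 0 else 1, by simp, ?_, ?_, ?_⟩
      · intro t ht _
        simp only [if_neg (show ¬ t = 0 by omega)]; norm_num
      · intro t ht _
        simp only [if_neg (show ¬ t = 0 by omega), if_neg (show ¬ t + 1 = 0 by omega)]; exact le_rfl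
      · rw [hsplit, Finset.sum_cons]
        have hrest0 : ∑ t ∈ Finset.Ioc 1 T,
            (z t / (if t = 0 then (0:ℝ) else 1) +
              ((if t = 0 then (0:ℝ) else 1) - (if t - 1 = 0 then (0:ℝ) else 1)) * h t) = 0 := by
          apply Finset.sum_eq_zero
          intro t ht
          rw [Finset.mem_Ioc] at ht
          have h2t : 2 ≤ t := ht.1
          rw [hzt t h2t, if_neg (by omega : ¬ t = 0), if_neg (by omega : ¬ t - 1 = 0)]
          simp
        rw [hrest0, hz1, hh1]
        norm_num
    exact le_antisymm (csInf_le ⟨2, hlb⟩ hmem) (le_csInf ⟨2, hmem⟩ hlb)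
  · rw [hF]
    set s := Real.sqrt (T : ℝ) with hs
    have hTpos : (0:ℝ) < T := by exact_mod_cast Nat.lt_of_lt_of_le Nat.zero_lt_one hT
    have hspos : 0 < s := Real.sqrt_pos.mpr hTpos
    have hss : s * s = (T : ℝ) := Real.mul_self_sqrt hTpos.le
    apply csInf_le
    · refine ⟨0, ?_⟩
      rintro y ⟨β, hβ0, hβpos, hβmono, rfl⟩
      apply Finset.sum_nonneg
      intro t ht
      rw [Finset.mem_Icc] at ht
      have hβt : 0 < β t := hβpos t ht.1 ht.2
      have hdiff : 0 ≤ β t - β (t - 1) := by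
        rcases eq_or_lt_of_le ht.1 with h1 | h1
        · have ht1 : t = 1 := h1.symm
          subst ht1
          simp only [Nat.sub_self, hβ0]
          linarith
        · have := hβmono (t - 1) (by omega) (by omega)
          have heq : t - 1 + 1 = t := by omega
          rw [heq] at this; linarith
      have hht' : 0 ≤ h t := by
        rcases eq_or_lt_of_le ht.1 with h1 | h1
        · have ht1 : t = 1 := h1.symm
          subst ht1; rw [hh1]; norm_num
        · rw [hht t (by omega)]; linarith
      have : 0 ≤ z' t / β t := by rw [hz' t]; positivity
      nlinarith
    · refine ⟨fun t => if t = 0 then 0 else s, by simp, ?_, ?_, ?_⟩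
      · intro t ht _
        simp only [if_neg (show ¬ t = 0 by omega)]; exact hspos
      · intro t ht _
        simp only [if_neg (show ¬ t = 0 by omega), if_neg (show ¬ t + 1 = 0 by omega)]; exact le_rfl
      · rw [hsplit, Finset.sum_cons]
        have hrest : ∑ t ∈ Finset.Ioc 1 T,
            (z' t / (if t = 0 then (0:ℝ) else s) +
              ((if t = 0 then (0:ℝ) else s) - (if t - 1 = 0 then (0:ℝ) else s)) * h t)
            = (T - 1 : ℕ) * (1 / s) := by
          rw [Finset.sum_congr rfl (fun t ht => ?_), Finset.sum_const,
            Nat.card_Ioc, nsmul_eq_mul]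
          rw [Finset.mem_Ioc] at ht
          rw [hz' t, if_neg (by omega : ¬ t = 0), if_neg (by omega : ¬ t - 1 = 0)]
          simp
        rw [hrest, hz' 1]
        have hcast : ((T - 1 : ℕ) : ℝ) = (T : ℝ) - 1 := by
          rw [Nat.cast_sub hT]; norm_num
        rw [hcast]
        simp only [if_neg (one_ne_zero), if_pos rfl, hh1]
        field_simp
        rw [if_pos trivial]
        nlinarith
end

section
/- Let α ∈ (0,1), q ∈ (0,1), and ℓ ∈ ℝ with ℓ ≥ −((1−α)/2)·q^{α−1}. Then for all p ∈ (0,1), ℓ·(q−p) − d(p,q) ≤ 2·q^{2−α}·ℓ²/(1−α), where d(p,q) = α^{-1}q^α + (p−q)q^{α−1} − α^{-1}p^α. -/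
open Real Set

section
variable {α q t p : ℝ}

lemma bern_le {α a b : ℝ} (hα0 : 0 ≤ α) (hα1 : α ≤ 1) (ha : 0 < a) (hb : 0 ≤ b) :
    b ^ α ≤ a ^ α + α * a ^ (α - 1) * (b - a) := by
  have hs : -1 ≤ b / a - 1 := by
    have : 0 ≤ b / a := div_nonneg hb ha.le
    linarith
  have h := rpow_one_add_le_one_add_mul_self hs hα0 hα1
  have h1 : (1 : ℝ) + (b / a - 1) = b / a := by ring
  rw [h1] at h
  rw [Real.div_rpow hb ha.le] at h
  have haα : (0:ℝ) < a ^ α := Real.rpow_pos_of_pos ha _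
  have h3 : b ^ α ≤ (1 + α * (b / a - 1)) * a ^ α := by
    rw [div_le_iff₀ haα] at h; linarith [h]
  have h4 : a ^ (α - 1) = a ^ α / a := by
    rw [Real.rpow_sub ha, Real.rpow_one]
  rw [h4]
  have h5 : (1 + α * (b / a - 1)) * a ^ α = a ^ α + α * (a ^ α / a) * (b - a) := by
    field_simp
  linarith [h3, h5.le, h5.ge]


lemma bern_ge {α q t : ℝ} (hα0 : 0 ≤ α) (hα1 : α ≤ 1) (hq : 0 < q) (ht : 0 < t) :
    q ^ (α - 1) + (α - 1) * q ^ (α - 2) * (t - q) ≤ t ^ (α - 1) := by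
  obtain ⟨s, hs_def⟩ : ∃ s : ℝ, s = t / q - 1 := ⟨_, rfl⟩
  have hts : 0 < t / q := div_pos ht hq
  have hs : -1 ≤ s := by rw [hs_def]; linarith
  have h := rpow_one_add_le_one_add_mul_self hs (by linarith : (0:ℝ) ≤ 1 - α) (by linarith)
  have h1 : (1 : ℝ) + s = t / q := by rw [hs_def]; ring
  rw [h1] at h
  have hXpos : (0:ℝ) < (t / q) ^ (α - 1) := Real.rpow_pos_of_pos hts _
  have hpos2 : (0:ℝ) < 1 + (1 - α) * s :=
    lt_of_lt_of_le (Real.rpow_pos_of_pos hts _) h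
  have hmulone : (t / q) ^ (α - 1) * (t / q) ^ (1 - α) = 1 := by
    rw [← Real.rpow_add hts]; norm_num
  have h6 : 1 ≤ (t / q) ^ (α - 1) * (1 + (1 - α) * s) := by
    calc (1:ℝ) = (t / q) ^ (α - 1) * (t / q) ^ (1 - α) := hmulone.symm
    _ ≤ (t / q) ^ (α - 1) * (1 + (1 - α) * s) :=
      mul_le_mul_of_nonneg_left h hXpos.le
  have h7 : (1 + (α - 1) * s) * (1 + (1 - α) * s) ≤ 1 := by
    nlinarith [sq_nonneg ((1 - α) * s)]
  have key : 1 + (α - 1) * s ≤ (t / q) ^ (α - 1) :=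
    le_of_mul_le_mul_right (by nlinarith) hpos2
  have hqa : (0:ℝ) < q ^ (α - 1) := Real.rpow_pos_of_pos hq _
  have hsplit : t ^ (α - 1) = q ^ (α - 1) * (t / q) ^ (α - 1) := by
    rw [← Real.mul_rpow hq.le hts.le]; congr 1; field_simp
  have hq2 : q ^ (α - 1) = q ^ (α - 2) * q := by
    rw [← Real.rpow_add_one hq.ne']; ring_nf
  have hsq : q * s = t - q := by rw [hs_def]; field_simp
  have hlink : q ^ (α - 1) * s = q ^ (α - 2) * (t - q) := by
    rw [hq2, mul_assoc, hsq]
  have expand : q ^ (α - 1) * (1 + (α - 1) * s)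
      = q ^ (α - 1) + (α - 1) * (q ^ (α - 2) * (t - q)) := by
    calc q ^ (α - 1) * (1 + (α - 1) * s)
        = q ^ (α - 1) + (α - 1) * (q ^ (α - 1) * s) := by ring
      _ = q ^ (α - 1) + (α - 1) * (q ^ (α - 2) * (t - q)) := by rw [hlink]
  rw [hsplit]
  calc q ^ (α - 1) + (α - 1) * q ^ (α - 2) * (t - q)
      = q ^ (α - 1) * (1 + (α - 1) * s) := by rw [expand]; ring
    _ ≤ q ^ (α - 1) * ((t / q) ^ (α - 1)) := mul_le_mul_of_nonneg_left key hqa.le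

/-- Bregman lower bound, `p ≥ q` case. -/
lemma bregman_right' {α q p : ℝ} (hα0 : 0 < α) (hα1 : α < 1) (hq : 0 < q) (hqp : q ≤ p) :
    (1 - α) / 2 * p ^ (α - 2) * (p - q) ^ 2
      ≤ α⁻¹ * q ^ α + (p - q) * q ^ (α - 1) - α⁻¹ * p ^ α := by
  set g : ℝ → ℝ := fun t =>
    α⁻¹ * t ^ α + (p - t) * t ^ (α - 1) - α⁻¹ * p ^ α
      - (1 - α) / 2 * p ^ (α - 2) * (p - t) ^ 2 with hg
  have hp : 0 < p := lt_of_lt_of_le hq hqp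
  have hD : ∀ t : ℝ, 0 < t → HasDerivAt g
      (α⁻¹ * (α * t ^ (α - 1)) + ((-1) * t ^ (α - 1) + (p - t) * ((α - 1) * t ^ (α - 2)))
        - (1 - α) / 2 * p ^ (α - 2) * ((2 : ℕ) * (p - t) ^ 1 * (-1))) t := by
    intro t ht
    have h1 : HasDerivAt (fun t : ℝ => t ^ α) (α * t ^ (α - 1)) t :=
      Real.hasDerivAt_rpow_const (Or.inl ht.ne')
    have h2 : HasDerivAt (fun t : ℝ => t ^ (α - 1)) ((α - 1) * t ^ (α - 2)) t := by
      have := Real.hasDerivAt_rpow_const (x := t) (p := α - 1) (Or.inl ht.ne')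
      convert this using 2; ring
    have h3 : HasDerivAt (fun t : ℝ => p - t) (-1) t := (hasDerivAt_id t).const_sub p
    have h4 := h3.mul h2
    have h5 := h3.pow 2
    exact (((h1.const_mul α⁻¹).add h4).sub_const (α⁻¹ * p ^ α)).sub
      (h5.const_mul ((1 - α) / 2 * p ^ (α - 2)))
  have hanti : AntitoneOn g (Icc q p) := by
    apply antitoneOn_of_deriv_nonpos (convex_Icc q p)
    · intro t ht
      exact (hD t (lt_of_lt_of_le hq ht.1)).continuousAt.continuousWithinAt
    · intro t ht
      rw [interior_Icc] at ht
      exact (hD t (lt_trans hq ht.1)).differentiableAt.differentiableWithinAt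
    · intro t ht
      rw [interior_Icc] at ht
      rw [(hD t (lt_trans hq ht.1)).deriv]
      have htp : t ≤ p := ht.2.le
      have ht0 : 0 < t := lt_trans hq ht.1
      have hmono : p ^ (α - 2) ≤ t ^ (α - 2) :=
        Real.rpow_le_rpow_of_nonpos ht0 htp (by linarith)
      have hinv : α⁻¹ * α = 1 := inv_mul_cancel₀ hα0.ne'
      have key : α⁻¹ * (α * t ^ (α - 1)) = t ^ (α - 1) := by
        rw [← mul_assoc, hinv, one_mul]
      rw [key]
      have expand : t ^ (α - 1) + ((-1) * t ^ (α - 1) + (p - t) * ((α - 1) * t ^ (α - 2)))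
          - (1 - α) / 2 * p ^ (α - 2) * ((2 : ℕ) * (p - t) ^ 1 * (-1))
          = (1 - α) * (p - t) * (p ^ (α - 2) - t ^ (α - 2)) := by
        push_cast; ring
      rw [expand]
      have h1 : 0 ≤ p - t := by linarith
      have h2 : p ^ (α - 2) - t ^ (α - 2) ≤ 0 := by linarith
      exact mul_nonpos_of_nonneg_of_nonpos (mul_nonneg (by linarith) h1) h2
  have hgp : g p = 0 := by simp [hg]
  have := hanti (left_mem_Icc.mpr hqp) (right_mem_Icc.mpr hqp) hqp
  rw [hgp] at this
  have hgq : g q = α⁻¹ * q ^ α + (p - q) * q ^ (α - 1) - α⁻¹ * p ^ α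
      - (1 - α) / 2 * p ^ (α - 2) * (p - q) ^ 2 := by simp [hg]
  rw [hgq] at this
  linarith

/-- Bregman lower bound, `p ≤ q` case. -/
lemma bregman_left' {α q p : ℝ} (hα0 : 0 < α) (hα1 : α < 1) (hp : 0 < p) (hpq : p ≤ q) :
    (1 - α) / 2 * q ^ (α - 2) * (q - p) ^ 2
      ≤ α⁻¹ * q ^ α + (p - q) * q ^ (α - 1) - α⁻¹ * p ^ α := by
  set g : ℝ → ℝ := fun t =>
    α⁻¹ * q ^ α + (t - q) * q ^ (α - 1) - α⁻¹ * t ^ α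
      - (1 - α) / 2 * q ^ (α - 2) * (q - t) ^ 2 with hg
  have hq : 0 < q := lt_of_lt_of_le hp hpq
  have hD : ∀ t : ℝ, 0 < t → HasDerivAt g
      (1 * q ^ (α - 1) - α⁻¹ * (α * t ^ (α - 1))
        - (1 - α) / 2 * q ^ (α - 2) * ((2 : ℕ) * (q - t) ^ 1 * (-1))) t := by
    intro t ht
    have h1 : HasDerivAt (fun t : ℝ => t ^ α) (α * t ^ (α - 1)) t :=
      Real.hasDerivAt_rpow_const (Or.inl ht.ne')
    have h3 : HasDerivAt (fun t : ℝ => t - q) 1 t := (hasDerivAt_id t).sub_const q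
    have h3' : HasDerivAt (fun t : ℝ => q - t) (-1) t := (hasDerivAt_id t).const_sub q
    have h5 := h3'.pow 2
    exact ((((h3.mul_const (q ^ (α - 1))).const_add (α⁻¹ * q ^ α)).sub
      (h1.const_mul α⁻¹)).sub (h5.const_mul ((1 - α) / 2 * q ^ (α - 2))))
  have hanti : AntitoneOn g (Icc p q) := by
    apply antitoneOn_of_deriv_nonpos (convex_Icc p q)
    · intro t ht
      exact (hD t (lt_of_lt_of_le hp ht.1)).continuousAt.continuousWithinAt
    · intro t ht
      rw [interior_Icc] at ht
      exact (hD t (lt_trans hp ht.1)).differentiableAt.differentiableWithinAt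
    · intro t ht
      rw [interior_Icc] at ht
      rw [(hD t (lt_trans hp ht.1)).deriv]
      have ht0 : 0 < t := lt_trans hp ht.1
      have hber := bern_ge hα0.le hα1.le hq ht0
      have hinv : α⁻¹ * α = 1 := inv_mul_cancel₀ hα0.ne'
      have key : α⁻¹ * (α * t ^ (α - 1)) = t ^ (α - 1) := by
        rw [← mul_assoc, hinv, one_mul]
      rw [key]
      push_cast
      nlinarith [hber]
  have hgq : g q = 0 := by simp [hg]
  have := hanti (left_mem_Icc.mpr hpq) (right_mem_Icc.mpr hpq) hpq
  rw [hgq] at this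
  have hgp : g p = α⁻¹ * q ^ α + (p - q) * q ^ (α - 1) - α⁻¹ * p ^ α
      - (1 - α) / 2 * q ^ (α - 2) * (q - p) ^ 2 := by simp [hg]
  rw [hgp] at this
  linarith


end

/-- The key scalar inequality `α(1-α)/8 ≤ 1 + α - 2^α`, derived from `bregman_right'`
specialized at `q = 1`, `p = 2`. -/
lemma two_rpow_bound {α : ℝ} (hα0 : 0 < α) (hα1 : α < 1) :
    α * (1 - α) / 8 ≤ 1 + α - (2:ℝ) ^ α := by
  have h := bregman_right' hα0 hα1 one_pos (by norm_num : (1:ℝ) ≤ 2)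
  rw [Real.one_rpow, Real.one_rpow] at h
  have h4 : (2:ℝ) ^ ((2:ℝ)) = 4 := by
    rw [show ((2:ℝ)) = ((2:ℕ):ℝ) by norm_num, Real.rpow_natCast]; norm_num
  have h2 : (2:ℝ) ^ (α - 2) = (2:ℝ) ^ α / 4 := by
    rw [Real.rpow_sub (by norm_num : (0:ℝ) < 2), h4]
  rw [h2] at h
  -- h : (1-α)/2 * (2^α/4) * (2-1)^2 ≤ α⁻¹ + 1 - α⁻¹ * 2^α
  have hE1 : (1:ℝ) ≤ (2:ℝ) ^ α := Real.one_le_rpow (by norm_num) hα0.le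
  have hinv : α * α⁻¹ = 1 := mul_inv_cancel₀ hα0.ne'
  have h3 := mul_le_mul_of_nonneg_left h hα0.le
  -- α * ((1-α)/2 * (2^α/4)) ≤ α*α⁻¹ + α - α*α⁻¹*2^α = 1 + α - 2^α
  have e1 : α * (α⁻¹ * 1 + (2 - 1) * 1 - α⁻¹ * (2:ℝ)^α)
      = α * α⁻¹ + α - α * α⁻¹ * (2:ℝ)^α := by ring
  nlinarith [h3, hinv, hE1, hα0.le, mul_nonneg (mul_nonneg hα0.le (by linarith : (0:ℝ) ≤ 1 - α)) (by linarith : (0:ℝ) ≤ (2:ℝ)^α - 1)]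

set_option maxHeartbeats 1000000 in
/-- One-dimensional stability lemma for α-Tsallis entropy:
if `ℓ ≥ -((1-α)/2) q^(α-1)` then `ℓ(q-p) - d(p,q) ≤ 2 q^(2-α) ℓ² / (1-α)`. -/
theorem stmt9 (α p q ℓ : ℝ) (hα : α ∈ Set.Ioo (0 : ℝ) 1)
    (hp : p ∈ Set.Ioo (0 : ℝ) 1) (hq : q ∈ Set.Ioo (0 : ℝ) 1)
    (hℓ : -((1 - α) / 2 * q ^ (α - 1)) ≤ ℓ) :
    ℓ * (q - p) - (α⁻¹ * q ^ α + (p - q) * q ^ (α - 1) - α⁻¹ * p ^ α)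
      ≤ 2 * q ^ (2 - α) * ℓ ^ (2 : ℕ) / (1 - α) := by
  obtain ⟨hα0, hα1⟩ := hα
  obtain ⟨hp0, hp1⟩ := hp
  obtain ⟨hq0, hq1⟩ := hq
  have h1α : (0:ℝ) < 1 - α := by linarith
  obtain ⟨d, hd⟩ : ∃ d : ℝ, d = α⁻¹ * q ^ α + (p - q) * q ^ (α - 1) - α⁻¹ * p ^ α := ⟨_, rfl⟩
  rw [← hd]
  have hA : (0:ℝ) < q ^ (α - 2) := Real.rpow_pos_of_pos hq0 _
  have hB : (0:ℝ) < q ^ (2 - α) := Real.rpow_pos_of_pos hq0 _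
  have hH : (0:ℝ) < q ^ (α - 1) := Real.rpow_pos_of_pos hq0 _
  have hG : (0:ℝ) < q ^ α := Real.rpow_pos_of_pos hq0 _
  have hAB : q ^ (α - 2) * q ^ (2 - α) = 1 := by
    rw [← Real.rpow_add hq0]; norm_num
  have hqH : q * q ^ (α - 1) = q ^ α := by
    nth_rewrite 1 [← Real.rpow_one q]
    rw [← Real.rpow_add hq0]; norm_num
  have hBG : q ^ (2 - α) * q ^ α = q * q := by
    rw [← Real.rpow_add hq0, show (2:ℝ) - α + α = ((2:ℕ):ℝ) by push_cast; ring,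
      Real.rpow_natCast]
    ring
  rw [le_div_iff₀ h1α]
  -- goal : (ℓ * (q - p) - d) * (1 - α) ≤ 2 * q ^ (2 - α) * ℓ ^ 2
  rcases le_or_gt p q with hpq | hpq
  · -- Case 1 : p ≤ q
    have hB1 : (1 - α) / 2 * q ^ (α - 2) * (q - p) ^ 2 ≤ d := by
      rw [hd]; exact bregman_left' hα0 hα1 hp0 hpq
    have hdB : (1 - α) / 2 * (q - p) ^ 2 ≤ d * q ^ (2 - α) := by
      have h' := mul_le_mul_of_nonneg_right hB1 hB.le
      have e : (1 - α) / 2 * q ^ (α - 2) * (q - p) ^ 2 * q ^ (2 - α)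
          = (1 - α) / 2 * (q - p) ^ 2 := by
        linear_combination ((1 - α) / 2 * (q - p) ^ 2) * hAB
      rw [e] at h'; linarith
    have key : ((ℓ * (q - p) - d) * (1 - α)) * q ^ (2 - α)
        ≤ (2 * q ^ (2 - α) * ℓ ^ 2) * q ^ (2 - α) := by
      nlinarith [mul_le_mul_of_nonneg_left hdB h1α.le,
        sq_nonneg (ℓ * q ^ (2 - α) - (1 - α) * (q - p)), sq_nonneg (ℓ * q ^ (2 - α))]
    exact le_of_mul_le_mul_right key hB
  · -- Case 2 : q < p
    have hP : (0:ℝ) < p ^ (α - 2) := Real.rpow_pos_of_pos hp0 _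
    have hB2 : (1 - α) / 2 * p ^ (α - 2) * (p - q) ^ 2 ≤ d := by
      rw [hd]; exact bregman_right' hα0 hα1 hq0 hpq.le
    rcases le_or_gt 0 ℓ with hl | hl
    · -- ℓ ≥ 0 : LHS ≤ 0 ≤ RHS
      have h1 : ℓ * (q - p) ≤ 0 := mul_nonpos_of_nonneg_of_nonpos hl (by linarith)
      have h2 : (0:ℝ) ≤ d := le_trans (by positivity) hB2
      have h3 : (0:ℝ) ≤ 2 * q ^ (2 - α) * ℓ ^ 2 := by positivity
      have h4 : ℓ * (q - p) - d ≤ 0 := by linarith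
      exact le_trans (mul_nonpos_of_nonpos_of_nonneg h4 h1α.le) h3
    · -- ℓ < 0
      have hm : -ℓ ≤ (1 - α) / 2 * q ^ (α - 1) := by linarith
      rcases le_or_gt p (2 * q) with hp2q | hp2q
      · -- 3a : q < p ≤ 2q
        have s1 : (2 * q) ^ (α - 2) ≤ p ^ (α - 2) :=
          Real.rpow_le_rpow_of_nonpos hp0 hp2q (by linarith)
        have s2 : (2 * q) ^ (α - 2) = (2:ℝ) ^ (α - 2) * q ^ (α - 2) :=
          Real.mul_rpow (by norm_num) hq0.le
        have s3 : (1:ℝ) / 4 ≤ (2:ℝ) ^ (α - 2) := by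
          have := Real.rpow_le_rpow_of_exponent_le (by norm_num : (1:ℝ) ≤ 2)
            (by linarith : (-2:ℝ) ≤ α - 2)
          have e : (2:ℝ) ^ (-2:ℝ) = 1 / 4 := by
            rw [show (-2:ℝ) = ((-2:ℤ):ℝ) by norm_num, Real.rpow_intCast]; norm_num
          rw [e] at this; linarith
        have hPA : (1:ℝ) / 4 * q ^ (α - 2) ≤ p ^ (α - 2) := by
          nlinarith [s1, s2, s3, hA]
        have hd8 : (1 - α) / 8 * q ^ (α - 2) * (p - q) ^ 2 ≤ d := by
          nlinarith [hB2, mul_nonneg (mul_nonneg h1α.le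
            (sub_nonneg.mpr hPA)) (sq_nonneg (p - q))]
        have hdB : (1 - α) / 8 * (p - q) ^ 2 ≤ d * q ^ (2 - α) := by
          have h' := mul_le_mul_of_nonneg_right hd8 hB.le
          have e : (1 - α) / 8 * q ^ (α - 2) * (p - q) ^ 2 * q ^ (2 - α)
              = (1 - α) / 8 * (p - q) ^ 2 := by
            linear_combination ((1 - α) / 8 * (p - q) ^ 2) * hAB
          rw [e] at h'; linarith
        have key : ((ℓ * (q - p) - d) * (1 - α)) * q ^ (2 - α)
            ≤ (2 * q ^ (2 - α) * ℓ ^ 2) * q ^ (2 - α) := by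
          nlinarith [mul_le_mul_of_nonneg_left hdB h1α.le,
            sq_nonneg ((1 - α) * (p - q) + 4 * q ^ (2 - α) * ℓ),
            sq_nonneg (ℓ * q ^ (2 - α))]
        exact le_of_mul_le_mul_right key hB
      · -- 3b : p > 2q
        have h2q0 : (0:ℝ) < 2 * q := by linarith
        have hpq2 : (0:ℝ) ≤ p - 2 * q := by linarith
        have hE1 : (1:ℝ) ≤ (2:ℝ) ^ α := Real.one_le_rpow (by norm_num) hα0.le
        have hii := two_rpow_bound hα0 hα1
        have hinv : α⁻¹ * α = 1 := inv_mul_cancel₀ hα0.ne'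
        -- (2q)^α = 2^α * q^α ; (2q)^(α-1) = (2^α/2) * q^(α-1)
        have e1 : (2 * q) ^ α = (2:ℝ) ^ α * q ^ α := Real.mul_rpow (by norm_num) hq0.le
        have e2 : (2 * q) ^ (α - 1) = ((2:ℝ) ^ α / 2) * q ^ (α - 1) := by
          rw [Real.mul_rpow (by norm_num) hq0.le, Real.rpow_sub (by norm_num : (0:ℝ) < 2),
            Real.rpow_one]
        have hbern := bern_le hα0.le hα1.le h2q0 hp0.le
        rw [e1, e2] at hbern
        -- hbern : p^α ≤ 2^α*q^α + α*((2^α/2)*q^(α-1))*(p - 2q)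
        have hbern' : α⁻¹ * p ^ α
            ≤ α⁻¹ * ((2:ℝ) ^ α * q ^ α) + ((2:ℝ) ^ α / 2) * q ^ (α - 1) * (p - 2 * q) := by
          have h' := mul_le_mul_of_nonneg_left hbern (inv_nonneg.mpr hα0.le)
          have e : α⁻¹ * ((2:ℝ) ^ α * q ^ α + α * ((2:ℝ) ^ α / 2 * q ^ (α - 1)) * (p - 2 * q))
              = α⁻¹ * ((2:ℝ) ^ α * q ^ α) + (α⁻¹ * α) * (((2:ℝ) ^ α / 2) * q ^ (α - 1) * (p - 2 * q)) := by
            ring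
          rw [e, hinv, one_mul] at h'
          exact h'
        -- coefficient inequalities
        have t1 := mul_le_mul_of_nonneg_left hii (inv_nonneg.mpr hα0.le)
        have t2 : α⁻¹ * (α * (1 - α) / 8) = (1 - α) / 8 := by
          field_simp
        have hcoef1 : (1 - α) / 8 ≤ α⁻¹ * (1 - (2:ℝ) ^ α) + 1 := by
          have e : α⁻¹ * (1 + α - (2:ℝ) ^ α) = α⁻¹ * (1 - (2:ℝ) ^ α) + α⁻¹ * α := by ring
          rw [e, hinv] at t1
          rw [t2] at t1; linarith
        have hcoef2 : (0:ℝ) ≤ 1 - (2:ℝ) ^ α / 2 - (1 - α) / 2 := by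
          nlinarith [hii, mul_nonneg hα0.le h1α.le]
        -- (★) : (1-α)/2 * H * (p - 2q) + (1-α) * G / 8 ≤ d
        have hstar : (1 - α) / 2 * q ^ (α - 1) * (p - 2 * q) + (1 - α) * q ^ α / 8 ≤ d := by
          rw [hd]
          have hcoef1' : (0:ℝ) ≤ α⁻¹ * (1 - (2:ℝ) ^ α) + 1 - (1 - α) / 8 := by linarith
          nlinarith [hbern', mul_nonneg hG.le hcoef1',
            mul_nonneg (mul_nonneg hpq2 hH.le) hcoef2, hqH]
        -- AM-GM : (1-α) * (-ℓ) * q ≤ 2 * B * ℓ² + (1-α)² * G / 8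
        have hGB2 : (1 - α) ^ 2 * (q ^ (2 - α) * q ^ α) = (1 - α) ^ 2 * (q * q) := by
          rw [hBG]
        have hamgm : (1 - α) * (-ℓ) * q
            ≤ 2 * q ^ (2 - α) * ℓ ^ 2 + (1 - α) ^ 2 * q ^ α / 8 := by
          have key' : ((1 - α) * (-ℓ) * q) * q ^ (2 - α)
              ≤ (2 * q ^ (2 - α) * ℓ ^ 2 + (1 - α) ^ 2 * q ^ α / 8) * q ^ (2 - α) := by
            nlinarith [sq_nonneg ((1 - α) * q + 4 * q ^ (2 - α) * ℓ), hGB2, hB]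
          exact le_of_mul_le_mul_right key' hB
        -- assemble
        have hmx := mul_le_mul_of_nonneg_right hm hpq2
        -- hmx : (-ℓ) * (p - 2q) ≤ (1-α)/2 * H * (p - 2q)
        nlinarith [hamgm, mul_le_mul_of_nonneg_left hstar h1α.le,
          mul_le_mul_of_nonneg_left hmx h1α.le]
end

section
/- Let α ∈ (0,1), ω > 1, and let q, r be probability vectors in the K-simplex with r_i ≤ ω·q_i for all i ∈ [K]. Then −ψ(r) ≤ −(1 + (ω−1)α)·ψ(q) ≤ −ω·ψ(q), where ψ(p) = −(1/α)·Σ_{i=1}^K (p_i^α − p_i). -/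
lemma tangent_rpow {α q r : ℝ} (hα0 : 0 < α) (hα1 : α ≤ 1) (hq : 0 < q) (hr : 0 ≤ r) :
    r ^ α ≤ q ^ α + α * q ^ (α - 1) * (r - q) := by
  have ht : (0:ℝ) ≤ r / q := div_nonneg hr hq.le
  have h := rpow_one_add_le_one_add_mul_self (s := r / q - 1) (by linarith) hα0.le hα1
  rw [add_sub_cancel] at h
  have hq' : q ^ α * (r / q) ^ α = r ^ α := by
    rw [← Real.mul_rpow hq.le ht, mul_div_cancel₀ _ hq.ne']
  have h2 := mul_le_mul_of_nonneg_left h (Real.rpow_nonneg hq.le α)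
  rw [hq'] at h2
  have h3 : q ^ (α - 1) = q ^ α / q := Real.rpow_sub_one hq.ne' α
  calc r ^ α ≤ q ^ α * (1 + α * (r / q - 1)) := h2
    _ = q ^ α + α * (q ^ α / q) * (r - q) := by field_simp
    _ = q ^ α + α * q ^ (α - 1) * (r - q) := by rw [h3]

/-- If `r i ≤ ω * q i` for all `i`, then `-ψ(r) ≤ -(1 + (ω-1)α) ψ(q) ≤ -ω ψ(q)`,
where `ψ` is the negative α-Tsallis entropy on the simplex. -/
theorem stmt10 (K : ℕ) (α ω : ℝ) (hα : α ∈ Set.Ioo (0 : ℝ) 1) (hω : 1 < ω)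
    (q r : Fin K → ℝ)
    (hq0 : ∀ i, 0 < q i) (hq1 : ∑ i, q i = 1)
    (hr0 : ∀ i, 0 ≤ r i) (hr1 : ∑ i, r i = 1)
    (hrq : ∀ i, r i ≤ ω * q i)
    (ψ : (Fin K → ℝ) → ℝ)
    (hψ : ∀ p, ψ p = -(1 / α) * ∑ i, ((p i) ^ α - p i)) :
    -ψ r ≤ -((1 + (ω - 1) * α) * ψ q) ∧ -((1 + (ω - 1) * α) * ψ q) ≤ -(ω * ψ q) := by
  obtain ⟨hα0, hα1⟩ := hα
  set S := ∑ i, (q i) ^ α with hS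
  set A := ∑ i, (r i) ^ α with hA
  have hqle1 : ∀ i, q i ≤ 1 := by
    intro i
    rw [← hq1]
    exact Finset.single_le_sum (fun j _ => (hq0 j).le) (Finset.mem_univ i)
  have hpow : ∀ i, q i ≤ (q i) ^ α := by
    intro i
    have := Real.rpow_le_rpow_of_exponent_ge (hq0 i) (hqle1 i) hα1.le
    rwa [Real.rpow_one] at this
  have hS1 : 1 ≤ S := by
    rw [← hq1]
    exact Finset.sum_le_sum fun i _ => hpow i
  have hb : ∀ i, 1 ≤ (q i) ^ (α - 1) := fun i =>
    Real.one_le_rpow_of_pos_of_le_one_of_nonpos (hq0 i) (hqle1 i) (by linarith)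
  -- key bound: A ≤ S + α * (ω - 1) * (S - 1)
  have key : A ≤ S + α * (ω - 1) * (S - 1) := by
    have step1 : A ≤ ∑ i, ((q i) ^ α + α * (q i) ^ (α - 1) * (r i - q i)) :=
      Finset.sum_le_sum fun i _ => tangent_rpow hα0 hα1.le (hq0 i) (hr0 i)
    have hzero : ∑ i, (r i - q i) = 0 := by
      rw [Finset.sum_sub_distrib, hq1, hr1]; ring
    have step2 : ∑ i, ((q i) ^ (α - 1) * (r i - q i))
        ≤ ∑ i, (((q i) ^ (α - 1) - 1) * ((ω - 1) * q i)) := by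
      calc ∑ i, ((q i) ^ (α - 1) * (r i - q i))
          = ∑ i, (((q i) ^ (α - 1) - 1) * (r i - q i)) + ∑ i, (r i - q i) := by
            rw [← Finset.sum_add_distrib]
            exact Finset.sum_congr rfl fun i _ => by ring
        _ = ∑ i, (((q i) ^ (α - 1) - 1) * (r i - q i)) := by rw [hzero, add_zero]
        _ ≤ ∑ i, (((q i) ^ (α - 1) - 1) * ((ω - 1) * q i)) := by
            refine Finset.sum_le_sum fun i _ => ?_
            have h1 := hrq i
            have h2 := hb i
            have h3 : r i - q i ≤ (ω - 1) * q i := by linarith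
            exact mul_le_mul_of_nonneg_left h3 (by linarith)
    have step3 : ∑ i, (((q i) ^ (α - 1) - 1) * ((ω - 1) * q i)) = (ω - 1) * (S - 1) := by
      have heq : ∀ i, ((q i) ^ (α - 1) - 1) * ((ω - 1) * q i)
          = (ω - 1) * ((q i) ^ α - q i) := by
        intro i
        have h3 : (q i) ^ (α - 1) * q i = (q i) ^ α := by
          rw [Real.rpow_sub_one (hq0 i).ne', div_mul_cancel₀ _ (hq0 i).ne']
        nlinarith [h3]
      rw [Finset.sum_congr rfl fun i _ => heq i, ← Finset.mul_sum,
        Finset.sum_sub_distrib, hq1]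
    have step1' : A ≤ S + α * ∑ i, ((q i) ^ (α - 1) * (r i - q i)) := by
      calc A ≤ ∑ i, ((q i) ^ α + α * (q i) ^ (α - 1) * (r i - q i)) := step1
        _ = S + α * ∑ i, ((q i) ^ (α - 1) * (r i - q i)) := by
            rw [Finset.mul_sum, Finset.sum_add_distrib]
            congr 1
            exact Finset.sum_congr rfl fun i _ => by ring
    have h4 : α * ∑ i, ((q i) ^ (α - 1) * (r i - q i)) ≤ α * ((ω - 1) * (S - 1)) := by
      rw [← step3]
      exact mul_le_mul_of_nonneg_left step2 hα0.le
    nlinarith [step1', h4]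
  have hψq : ψ q = -(1 / α) * (S - 1) := by
    rw [hψ, Finset.sum_sub_distrib, hq1]
  have hψr : ψ r = -(1 / α) * (A - 1) := by
    rw [hψ, Finset.sum_sub_distrib, hr1]
  have hinv : 0 < 1 / α := by positivity
  constructor
  · rw [hψq, hψr]
    have h : A - 1 ≤ (1 + (ω - 1) * α) * (S - 1) := by nlinarith [key]
    calc -(-(1 / α) * (A - 1)) = (1 / α) * (A - 1) := by ring
      _ ≤ (1 / α) * ((1 + (ω - 1) * α) * (S - 1)) := mul_le_mul_of_nonneg_left h hinv.le
      _ = -((1 + (ω - 1) * α) * (-(1 / α) * (S - 1))) := by ring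
  · rw [hψq]
    have hc : 1 + (ω - 1) * α ≤ ω := by nlinarith
    have hX : 0 ≤ (1 / α) * (S - 1) := mul_nonneg hinv.le (by linarith)
    calc -((1 + (ω - 1) * α) * (-(1 / α) * (S - 1)))
        = (1 + (ω - 1) * α) * ((1 / α) * (S - 1)) := by ring
      _ ≤ ω * ((1 / α) * (S - 1)) := mul_le_mul_of_nonneg_right hc hX
      _ = -(ω * (-(1 / α) * (S - 1))) := by ring
end

section
/- Let h_1 ≥ h_2 ≥ ... ≥ h_{T+1} > 0 and z_1,...,z_T ∈ [0, z_max]. Define for j ≥ 1, θ_j = h_1·2^{−j}, θ_0 = h_1, T_j = {t ∈ [T] : θ_{j-1} ≥ h_t > θ_j}, T'_j = {t ∈ [T] : θ_{j-1} ≥ h_{t+1} > θ_j}, and H(z; h_{1:T}) = Σ_{j=1}^∞ sqrt(θ_{j-1}·Σ_{t ∈ T_j} z_t), H(z; h_{2:T+1}) = Σ_{j=1}^∞ sqrt(θ_{j-1}·Σ_{t ∈ T'_j} z_t). Then H(z; h_{1:T}) ≤ H(z; h_{2:T+1}) + 4·sqrt(h_1·z_max). -/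
private lemma my_sqrt_add_le {a b : ℝ} (ha : 0 ≤ a) (hb : 0 ≤ b) :
    Real.sqrt (a + b) ≤ Real.sqrt a + Real.sqrt b := by
  rw [show a + b = Real.sqrt a ^ 2 + Real.sqrt b ^ 2 by
    rw [Real.sq_sqrt ha, Real.sq_sqrt hb]]
  have sa := Real.sqrt_nonneg a
  have sb := Real.sqrt_nonneg b
  have : Real.sqrt a ^ 2 + Real.sqrt b ^ 2 ≤ (Real.sqrt a + Real.sqrt b) ^ 2 := by nlinarith
  calc Real.sqrt (Real.sqrt a ^ 2 + Real.sqrt b ^ 2)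
      ≤ Real.sqrt ((Real.sqrt a + Real.sqrt b) ^ 2) := Real.sqrt_le_sqrt this
    _ = Real.sqrt a + Real.sqrt b := Real.sqrt_sq (by positivity)

private lemma my_sqrt_pow {x : ℝ} (hx : 0 ≤ x) (n : ℕ) :
    Real.sqrt (x ^ n) = Real.sqrt x ^ n := by
  induction n with
  | zero => simp
  | succ n ih =>
    rw [pow_succ, pow_succ, Real.sqrt_mul (by positivity), ih]

/-- Shift bound for the dyadic quantity `H`:
`H(z; h_{1:T}) ≤ H(z; h_{2:T+1}) + 4 √(h 1 · z_max)` for non-increasing positive `h`. -/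
theorem stmt16 (T : ℕ) (z h : ℕ → ℝ) (zmax : ℝ)
    (hz : ∀ t, 1 ≤ t → t ≤ T → 0 ≤ z t)
    (hzmax : ∀ t, 1 ≤ t → t ≤ T → z t ≤ zmax)
    (hpos : ∀ t, 1 ≤ t → t ≤ T + 1 → 0 < h t)
    (hmono : ∀ t, 1 ≤ t → t ≤ T → h (t + 1) ≤ h t) :
    (∑' j : ℕ, Real.sqrt (h 1 * (2 : ℝ) ^ (-(j : ℤ)) *
        ∑ t ∈ (Finset.Icc 1 T).filter
          (fun t => h t ≤ h 1 * (2 : ℝ) ^ (-(j : ℤ)) ∧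
            h 1 * (2 : ℝ) ^ (-((j : ℤ) + 1)) < h t), z t))
      ≤ (∑' j : ℕ, Real.sqrt (h 1 * (2 : ℝ) ^ (-(j : ℤ)) *
          ∑ t ∈ (Finset.Icc 1 T).filter
            (fun t => h (t + 1) ≤ h 1 * (2 : ℝ) ^ (-(j : ℤ)) ∧
              h 1 * (2 : ℝ) ^ (-((j : ℤ) + 1)) < h (t + 1)), z t))
        + 4 * Real.sqrt (h 1 * zmax) := by
  rcases Nat.eq_zero_or_pos T with hT | hT
  · subst hT
    simp only [show Finset.Icc 1 0 = (∅ : Finset ℕ) by decide, Finset.filter_empty,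
      Finset.sum_empty, mul_zero, Real.sqrt_zero, tsum_zero, zero_add]
    positivity
  -- main case: T ≥ 1
  have h1pos : 0 < h 1 := hpos 1 le_rfl (by omega)
  have hzm0 : 0 ≤ zmax := le_trans (hz 1 le_rfl hT) (hzmax 1 le_rfl hT)
  -- full monotonicity
  have hmono' : ∀ s t, 1 ≤ s → s ≤ t → t ≤ T + 1 → h t ≤ h s := by
    intro s t hs hst htT
    induction t with
    | zero => omega
    | succ n ih =>
      rcases Nat.eq_or_lt_of_le hst with rfl | hlt
      · exact le_rfl
      · have hn : s ≤ n := by omega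
        have h1n : 1 ≤ n := by omega
        exact le_trans (hmono n h1n (by omega)) (ih hn (by omega))
  set θ : ℕ → ℝ := fun j => h 1 * (2 : ℝ) ^ (-(j : ℤ)) with hθdef
  have hθpos : ∀ j, 0 < θ j := by
    intro j; exact mul_pos h1pos (zpow_pos (by norm_num) _)
  set A : ℕ → Finset ℕ := fun j => (Finset.Icc 1 T).filter
    (fun t => h t ≤ θ j ∧ h 1 * (2 : ℝ) ^ (-((j : ℤ) + 1)) < h t) with hAdef
  set B : ℕ → Finset ℕ := fun j => (Finset.Icc 1 T).filter
    (fun t => h (t + 1) ≤ θ j ∧ h 1 * (2 : ℝ) ^ (-((j : ℤ) + 1)) < h (t + 1)) with hBdef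
  -- the diff A j \ B j has at most one element
  have hcard : ∀ j, (A j \ B j).card ≤ 1 := by
    intro j
    rw [Finset.card_le_one]
    intro a ha b hb
    simp only [Finset.mem_sdiff, hAdef, hBdef, Finset.mem_filter, Finset.mem_Icc, not_and,
      not_lt] at ha hb
    obtain ⟨⟨⟨ha1, haT⟩, hale, halt⟩, hanot⟩ := ha
    obtain ⟨⟨⟨hb1, hbT⟩, hble, hblt⟩, hbnot⟩ := hb
    -- h (a+1) ≤ θ (j+1)
    have hsa : h (a + 1) ≤ h 1 * (2 : ℝ) ^ (-((j : ℤ) + 1)) := by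
      apply hanot ⟨ha1, haT⟩
      exact le_trans (hmono a ha1 haT) hale
    have hsb : h (b + 1) ≤ h 1 * (2 : ℝ) ^ (-((j : ℤ) + 1)) := by
      apply hbnot ⟨hb1, hbT⟩
      exact le_trans (hmono b hb1 hbT) hble
    by_contra hne
    rcases Nat.lt_or_ge a b with hab | hab
    · have : h b ≤ h (a + 1) := hmono' (a + 1) b (by omega) (by omega) (by omega)
      linarith
    · have hba : b < a := by omega
      have : h a ≤ h (b + 1) := hmono' (b + 1) a (by omega) (by omega) (by omega)
      linarith
  -- sum bound: ∑_{A j} z ≤ ∑_{B j} z + zmax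
  have hsum : ∀ j, (∑ t ∈ A j, z t) ≤ (∑ t ∈ B j, z t) + zmax := by
    intro j
    have hsplit : (∑ t ∈ A j ∩ B j, z t) + (∑ t ∈ A j \ B j, z t) = ∑ t ∈ A j, z t :=
      Finset.sum_inter_add_sum_sdiff _ _ _
    have h1' : (∑ t ∈ A j ∩ B j, z t) ≤ ∑ t ∈ B j, z t := by
      apply Finset.sum_le_sum_of_subset_of_nonneg (Finset.inter_subset_right)
      intro t ht _
      simp only [hBdef, Finset.mem_filter, Finset.mem_Icc] at ht
      exact hz t ht.1.1 ht.1.2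
    have h2' : (∑ t ∈ A j \ B j, z t) ≤ zmax := by
      have hb : ∀ t ∈ A j \ B j, z t ≤ zmax := by
        intro t ht
        have := (Finset.mem_sdiff.mp ht).1
        simp only [hAdef, Finset.mem_filter, Finset.mem_Icc] at this
        exact hzmax t this.1.1 this.1.2
      calc (∑ t ∈ A j \ B j, z t) ≤ (A j \ B j).card • zmax :=
            Finset.sum_le_card_nsmul _ _ _ hb
        _ ≤ 1 • zmax := by
            apply nsmul_le_nsmul_left hzm0 (hcard j)
        _ = zmax := one_smul _ _
    linarith
  -- nonnegativity of sums
  have hAnn : ∀ j, 0 ≤ ∑ t ∈ A j, z t := by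
    intro j
    apply Finset.sum_nonneg
    intro t ht
    simp only [hAdef, Finset.mem_filter, Finset.mem_Icc] at ht
    exact hz t ht.1.1 ht.1.2
  have hBnn : ∀ j, 0 ≤ ∑ t ∈ B j, z t := by
    intro j
    apply Finset.sum_nonneg
    intro t ht
    simp only [hBdef, Finset.mem_filter, Finset.mem_Icc] at ht
    exact hz t ht.1.1 ht.1.2
  -- bound by total sum C
  set C : ℝ := ∑ t ∈ Finset.Icc 1 T, z t with hCdef
  have hCnn : 0 ≤ C := Finset.sum_nonneg fun t ht => by
    rw [Finset.mem_Icc] at ht; exact hz t ht.1 ht.2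
  have hAC : ∀ j, (∑ t ∈ A j, z t) ≤ C := by
    intro j
    apply Finset.sum_le_sum_of_subset_of_nonneg (Finset.filter_subset _ _)
    intro t ht _; rw [Finset.mem_Icc] at ht; exact hz t ht.1 ht.2
  have hBC : ∀ j, (∑ t ∈ B j, z t) ≤ C := by
    intro j
    apply Finset.sum_le_sum_of_subset_of_nonneg (Finset.filter_subset _ _)
    intro t ht _; rw [Finset.mem_Icc] at ht; exact hz t ht.1 ht.2
  set q : ℝ := Real.sqrt (1 / 2) with hqdef
  have hq0 : 0 ≤ q := Real.sqrt_nonneg _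
  have hqsq : q ^ 2 = 1 / 2 := Real.sq_sqrt (by norm_num)
  have hq1 : q < 1 := by nlinarith
  -- express θ j * x sqrt as geometric
  have hθgeom : ∀ (j : ℕ) (x : ℝ), 0 ≤ x →
      Real.sqrt (θ j * x) = Real.sqrt (h 1 * x) * q ^ j := by
    intro j x hx
    have : θ j * x = (h 1 * x) * (1 / 2 : ℝ) ^ j := by
      simp only [hθdef]
      rw [zpow_neg, zpow_natCast]
      field_simp
      rw [mul_comm ((2:ℝ)^j) x, mul_assoc, ← mul_pow]; norm_num
    rw [this, Real.sqrt_mul (by positivity), my_sqrt_pow (by norm_num), hqdef]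
  -- summability
  have hgeo : Summable fun j : ℕ => q ^ j := summable_geometric_of_lt_one hq0 hq1
  have hsumF : Summable fun j : ℕ => Real.sqrt (θ j * ∑ t ∈ A j, z t) := by
    apply Summable.of_nonneg_of_le (fun j => Real.sqrt_nonneg _)
      (fun j => ?_) (hgeo.mul_left (Real.sqrt (h 1 * C)))
    rw [show Real.sqrt (h 1 * C) * q ^ j = Real.sqrt (θ j * C) by
      rw [hθgeom j C hCnn]]
    apply Real.sqrt_le_sqrt
    exact mul_le_mul_of_nonneg_left (hAC j) (hθpos j).le
  have hsumG : Summable fun j : ℕ => Real.sqrt (θ j * ∑ t ∈ B j, z t) := by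
    apply Summable.of_nonneg_of_le (fun j => Real.sqrt_nonneg _)
      (fun j => ?_) (hgeo.mul_left (Real.sqrt (h 1 * C)))
    rw [show Real.sqrt (h 1 * C) * q ^ j = Real.sqrt (θ j * C) by
      rw [hθgeom j C hCnn]]
    apply Real.sqrt_le_sqrt
    exact mul_le_mul_of_nonneg_left (hBC j) (hθpos j).le
  have hsumE : Summable fun j : ℕ => Real.sqrt (θ j * zmax) := by
    have : (fun j : ℕ => Real.sqrt (θ j * zmax))
        = fun j : ℕ => Real.sqrt (h 1 * zmax) * q ^ j := by
      funext j; exact hθgeom j zmax hzm0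
    rw [this]
    exact hgeo.mul_left _
  -- termwise bound
  have hterm : ∀ j, Real.sqrt (θ j * ∑ t ∈ A j, z t)
      ≤ Real.sqrt (θ j * ∑ t ∈ B j, z t) + Real.sqrt (θ j * zmax) := by
    intro j
    calc Real.sqrt (θ j * ∑ t ∈ A j, z t)
        ≤ Real.sqrt (θ j * ∑ t ∈ B j, z t + θ j * zmax) := by
          apply Real.sqrt_le_sqrt
          rw [← mul_add]
          exact mul_le_mul_of_nonneg_left (hsum j) (hθpos j).le
      _ ≤ Real.sqrt (θ j * ∑ t ∈ B j, z t) + Real.sqrt (θ j * zmax) :=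
          my_sqrt_add_le (mul_nonneg (hθpos j).le (hBnn j)) (mul_nonneg (hθpos j).le hzm0)
  -- error series value
  have hE : (∑' j : ℕ, Real.sqrt (θ j * zmax)) ≤ 4 * Real.sqrt (h 1 * zmax) := by
    have : (∑' j : ℕ, Real.sqrt (θ j * zmax))
        = Real.sqrt (h 1 * zmax) * (1 - q)⁻¹ := by
      calc (∑' j : ℕ, Real.sqrt (θ j * zmax))
          = ∑' j : ℕ, Real.sqrt (h 1 * zmax) * q ^ j := by
            congr 1; funext j; exact hθgeom j zmax hzm0
        _ = Real.sqrt (h 1 * zmax) * ∑' j : ℕ, q ^ j := tsum_mul_left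
        _ = Real.sqrt (h 1 * zmax) * (1 - q)⁻¹ := by
            rw [tsum_geometric_of_lt_one hq0 hq1]
    rw [this]
    have hq34 : q ≤ 3 / 4 := by nlinarith
    have hinv : (1 - q)⁻¹ ≤ 4 := by
      rw [inv_le_comm₀ (by linarith) (by norm_num)]
      linarith
    nlinarith [Real.sqrt_nonneg (h 1 * zmax), mul_le_mul_of_nonneg_left hinv (Real.sqrt_nonneg (h 1 * zmax))]
  -- conclude
  show (∑' j : ℕ, Real.sqrt (θ j * ∑ t ∈ A j, z t))
      ≤ (∑' j : ℕ, Real.sqrt (θ j * ∑ t ∈ B j, z t)) + 4 * Real.sqrt (h 1 * zmax)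
  calc (∑' j : ℕ, Real.sqrt (θ j * ∑ t ∈ A j, z t))
      ≤ ∑' j : ℕ, (Real.sqrt (θ j * ∑ t ∈ B j, z t) + Real.sqrt (θ j * zmax)) :=
        Summable.tsum_le_tsum hterm hsumF (hsumG.add hsumE)
    _ = (∑' j : ℕ, Real.sqrt (θ j * ∑ t ∈ B j, z t))
        + ∑' j : ℕ, Real.sqrt (θ j * zmax) := Summable.tsum_add hsumG hsumE
    _ ≤ (∑' j : ℕ, Real.sqrt (θ j * ∑ t ∈ B j, z t)) + 4 * Real.sqrt (h 1 * zmax) := by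
        linarith [hE]
end

section
/- Let z_1,...,z_T ≥ 0 and h_1,...,h_T > 0 with h_max = max_t h_t and z_max = max_t z_t. Define G(z,h) = Σ_{t=1}^T z_t·(Σ_{s=1}^t z_s/h_s)^{-1/2}. Then for every J ∈ ℕ, G(z,h) ≤ sqrt(8·J·Σ_{t=1}^T h_t·z_t) + 2·sqrt(2^{−J}·T·h_max·z_max). -/
open Finset
set_option maxHeartbeats 1000000


theorem lemB (a b : ℝ) (ha : 0 ≤ a) (hb : 0 ≤ b) :
    a / Real.sqrt (a + b) + 2 * Real.sqrt b ≤ 2 * Real.sqrt (a + b) := by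
  rcases eq_or_lt_of_le (by linarith : (0:ℝ) ≤ a + b) with h0 | h0
  · simp [← h0, show b = 0 by linarith, show a = 0 by linarith]
  · have hs : 0 < Real.sqrt (a + b) := Real.sqrt_pos.2 h0
    rw [div_add' _ _ _ hs.ne', div_le_iff₀ hs]
    have h1 : 2 * Real.sqrt b * Real.sqrt (a+b) ≤ b + (a + b) := by
      have := two_mul_le_add_sq (Real.sqrt b) (Real.sqrt (a+b))
      rwa [Real.sq_sqrt hb, Real.sq_sqrt h0.le] at this
    have h2 : Real.sqrt (a+b) * Real.sqrt (a+b) = a + b := Real.mul_self_sqrt h0.le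
    nlinarith [Real.sqrt_nonneg b, Real.sqrt_nonneg (a+b)]

theorem lemA (F : Finset ℕ) (w : ℕ → ℝ) (hw : ∀ t ∈ F, 0 ≤ w t) :
    ∑ t ∈ F, w t / Real.sqrt (∑ s ∈ F.filter (fun s => s ≤ t), w s)
      ≤ 2 * Real.sqrt (∑ t ∈ F, w t) := by
  induction F using Finset.strongInduction with
  | _ F ih =>
    rcases F.eq_empty_or_nonempty with rfl | hne
    · simp
    · obtain ⟨m, hm, hle⟩ : ∃ m ∈ F, ∀ s ∈ F, s ≤ m :=
        ⟨F.max' hne, F.max'_mem hne, fun s hs => F.le_max' s hs⟩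
      have hF : F = insert m (F.erase m) := (Finset.insert_erase hm).symm
      have hmem : m ∉ F.erase m := Finset.notMem_erase m F
      -- term at m uses full sum
      have hfiltm : F.filter (fun s => s ≤ m) = F := by
        apply Finset.filter_true_of_mem
        exact hle
      have hfilt : ∀ t ∈ F.erase m, F.filter (fun s => s ≤ t) = (F.erase m).filter (fun s => s ≤ t) := by
        intro t ht
        have htm : t < m := lt_of_le_of_ne (hle t (Finset.mem_of_mem_erase ht))
          (Finset.ne_of_mem_erase ht)
        ext s
        simp only [Finset.mem_filter, Finset.mem_erase]
        constructor
        · rintro ⟨hs, hst⟩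
          exact ⟨⟨by rintro rfl; exact absurd hst (not_le.2 htm), hs⟩, hst⟩
        · rintro ⟨⟨_, hs⟩, hst⟩; exact ⟨hs, hst⟩
      have key := ih (F.erase m) (Finset.erase_ssubset hm)
        (fun t ht => hw t (Finset.mem_of_mem_erase ht))
      rw [hF, Finset.sum_insert hmem, Finset.sum_insert hmem, ← hF, hfiltm]
      have hsum : ∑ t ∈ F.erase m, w t / Real.sqrt (∑ s ∈ F.filter (fun s => s ≤ t), w s)
          = ∑ t ∈ F.erase m, w t / Real.sqrt (∑ s ∈ (F.erase m).filter (fun s => s ≤ t), w s) := by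
        apply Finset.sum_congr rfl
        intro t ht; rw [hfilt t ht]
      rw [hsum]
      have hW' : 0 ≤ ∑ t ∈ F.erase m, w t :=
        Finset.sum_nonneg fun t ht => hw t (Finset.mem_of_mem_erase ht)
      have hFsum : ∑ t ∈ F, w t = w m + ∑ t ∈ F.erase m, w t := by
        rw [hF, Finset.sum_insert hmem, ← hF]
      rw [hFsum]
      have h1 := lemB (w m) (∑ t ∈ F.erase m, w t) (hw m hm) hW'
      linarith [key, h1]


theorem lemC (T : ℕ) (z h : ℕ → ℝ)
    (hz : ∀ t, 1 ≤ t → t ≤ T → 0 ≤ z t)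
    (hh : ∀ t, 1 ≤ t → t ≤ T → 0 < h t)
    (F : Finset ℕ) (hFsub : F ⊆ Finset.Icc 1 T)
    (θ : ℝ) (hθ : 0 < θ) (hhθ : ∀ t ∈ F, h t ≤ θ) :
    ∑ t ∈ F, z t / Real.sqrt (∑ s ∈ Finset.Icc 1 t, z s / h s)
      ≤ 2 * Real.sqrt (θ * ∑ t ∈ F, z t) := by
  have hmem : ∀ t ∈ F, 1 ≤ t ∧ t ≤ T := fun t ht => Finset.mem_Icc.1 (hFsub ht)
  have hzF : ∀ t ∈ F, 0 ≤ z t := fun t ht => hz t (hmem t ht).1 (hmem t ht).2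
  have step : ∀ t ∈ F, z t / Real.sqrt (∑ s ∈ Finset.Icc 1 t, z s / h s)
      ≤ Real.sqrt θ * (z t / Real.sqrt (∑ s ∈ F.filter (fun s => s ≤ t), z s)) := by
    intro t ht
    obtain ⟨ht1, ht2⟩ := hmem t ht
    rcases eq_or_lt_of_le (hzF t ht) with h0 | h0
    · rw [← h0]
      simp
    · have hZt : z t ≤ ∑ s ∈ F.filter (fun s => s ≤ t), z s :=
        Finset.single_le_sum (f := z) (fun s hs => hzF s (Finset.mem_filter.1 hs).1)
          (Finset.mem_filter.2 ⟨ht, le_refl t⟩)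
      have hZpos : 0 < ∑ s ∈ F.filter (fun s => s ≤ t), z s := lt_of_lt_of_le h0 hZt
      have hS1 : (∑ s ∈ F.filter (fun s => s ≤ t), z s) / θ
          ≤ ∑ s ∈ Finset.Icc 1 t, z s / h s := by
        rw [Finset.sum_div]
        calc ∑ s ∈ F.filter (fun s => s ≤ t), z s / θ
            ≤ ∑ s ∈ F.filter (fun s => s ≤ t), z s / h s := by
              apply Finset.sum_le_sum
              intro s hs
              obtain ⟨hsF, hst⟩ := Finset.mem_filter.1 hs
              have := hmem s hsF
              gcongr
              exacts [hzF s hsF, hh s this.1 this.2, hhθ s hsF]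
          _ ≤ ∑ s ∈ Finset.Icc 1 t, z s / h s := by
              apply Finset.sum_le_sum_of_subset_of_nonneg
              · intro s hs
                obtain ⟨hsF, hst⟩ := Finset.mem_filter.1 hs
                exact Finset.mem_Icc.2 ⟨(hmem s hsF).1, hst⟩
              · intro s hs _
                obtain ⟨hs1, hs2⟩ := Finset.mem_Icc.1 hs
                exact div_nonneg (hz s hs1 (hs2.trans ht2)) (hh s hs1 (hs2.trans ht2)).le
      have hq : 0 < (∑ s ∈ F.filter (fun s => s ≤ t), z s) / θ := div_pos hZpos hθ
      have key : z t / Real.sqrt (∑ s ∈ Finset.Icc 1 t, z s / h s)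
          ≤ z t / Real.sqrt ((∑ s ∈ F.filter (fun s => s ≤ t), z s) / θ) := by
        exact div_le_div_of_nonneg_left h0.le (Real.sqrt_pos.2 hq) (Real.sqrt_le_sqrt hS1)
      refine key.trans (le_of_eq ?_)
      rw [Real.sqrt_div hZpos.le, div_div_eq_mul_div, mul_comm, mul_div_assoc]
  calc ∑ t ∈ F, z t / Real.sqrt (∑ s ∈ Finset.Icc 1 t, z s / h s)
      ≤ ∑ t ∈ F, Real.sqrt θ * (z t / Real.sqrt (∑ s ∈ F.filter (fun s => s ≤ t), z s)) :=
        Finset.sum_le_sum step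
    _ = Real.sqrt θ * ∑ t ∈ F, z t / Real.sqrt (∑ s ∈ F.filter (fun s => s ≤ t), z s) :=
        (Finset.mul_sum _ _ _).symm
    _ ≤ Real.sqrt θ * (2 * Real.sqrt (∑ t ∈ F, z t)) :=
        mul_le_mul_of_nonneg_left (lemA F z hzF) (Real.sqrt_nonneg θ)
    _ = 2 * Real.sqrt (θ * ∑ t ∈ F, z t) := by
        rw [Real.sqrt_mul hθ.le]; ring


noncomputable def Bset (T : ℕ) (h : ℕ → ℝ) (hmax : ℝ) (j : ℕ) : Finset ℕ :=
  (Finset.Icc 1 T).filter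
    (fun t => h t ≤ hmax * (2:ℝ)^(-(j:ℤ)) ∧ hmax * (2:ℝ)^(-(j:ℤ)-1) < h t)

noncomputable def Aset (T : ℕ) (h : ℕ → ℝ) (hmax : ℝ) (K : ℕ) : Finset ℕ :=
  (Finset.Icc 1 T).filter (fun t => h t ≤ hmax * (2:ℝ)^(-(K:ℤ)))

/-- Dyadic bound on `G`: for every `J`,
`G(z,h) ≤ sqrt (8 J ∑ h t z t) + 2 sqrt (2^{-J} T h_max z_max)`. -/
theorem stmt17 (T : ℕ) (z h : ℕ → ℝ) (hmax zmax : ℝ)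
    (hz : ∀ t, 1 ≤ t → t ≤ T → 0 ≤ z t)
    (hh : ∀ t, 1 ≤ t → t ≤ T → 0 < h t)
    (hhmax : ∀ t, 1 ≤ t → t ≤ T → h t ≤ hmax)
    (hzmax : ∀ t, 1 ≤ t → t ≤ T → z t ≤ zmax) :
    ∀ J : ℕ,
      (∑ t ∈ Finset.Icc 1 T, z t / Real.sqrt (∑ s ∈ Finset.Icc 1 t, z s / h s))
        ≤ Real.sqrt (8 * (J : ℝ) * ∑ t ∈ Finset.Icc 1 T, h t * z t)
          + 2 * Real.sqrt ((2 : ℝ) ^ (-(J : ℤ)) * (T : ℝ) * hmax * zmax) := by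
  intro J
  rcases Nat.eq_zero_or_pos T with rfl | hT
  · simp only [Finset.Icc_eq_empty_of_lt (by norm_num : (1:ℕ) > 0), Finset.sum_empty]
    positivity
  have hT1 : 1 ≤ T := hT
  have hmax0 : 0 < hmax := lt_of_lt_of_le (hh 1 le_rfl hT1) (hhmax 1 le_rfl hT1)
  have zmax0 : 0 ≤ zmax := le_trans (hz 1 le_rfl hT1) (hzmax 1 le_rfl hT1)
  have hmemIcc : ∀ t ∈ Finset.Icc 1 T, 1 ≤ t ∧ t ≤ T := fun t ht => Finset.mem_Icc.1 ht
  have hznn : ∀ t ∈ Finset.Icc 1 T, 0 ≤ z t := fun t ht =>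
    hz t (hmemIcc t ht).1 (hmemIcc t ht).2
  have hhznn : ∀ t ∈ Finset.Icc 1 T, 0 ≤ h t * z t := fun t ht =>
    mul_nonneg (hh t (hmemIcc t ht).1 (hmemIcc t ht).2).le (hznn t ht)
  -- the dyadic claim
  have claim : ∀ K : ℕ,
      (∑ t ∈ Finset.Icc 1 T, z t / Real.sqrt (∑ s ∈ Finset.Icc 1 t, z s / h s))
        ≤ 2 * (∑ j ∈ Finset.range K, Real.sqrt (2 * ∑ t ∈ Bset T h hmax j, h t * z t))
          + ∑ t ∈ Aset T h hmax K, z t / Real.sqrt (∑ s ∈ Finset.Icc 1 t, z s / h s) := by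
    intro K
    induction K with
    | zero =>
      have hA0 : Aset T h hmax 0 = Finset.Icc 1 T := by
        apply Finset.filter_true_of_mem
        intro t ht
        simpa using hhmax t (hmemIcc t ht).1 (hmemIcc t ht).2
      simp [hA0]
    | succ K ih =>
      refine ih.trans ?_
      have hsplit : ∑ t ∈ Aset T h hmax K, z t / Real.sqrt (∑ s ∈ Finset.Icc 1 t, z s / h s)
          = (∑ t ∈ Bset T h hmax K, z t / Real.sqrt (∑ s ∈ Finset.Icc 1 t, z s / h s))
            + ∑ t ∈ Aset T h hmax (K+1), z t / Real.sqrt (∑ s ∈ Finset.Icc 1 t, z s / h s) := by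
        rw [← Finset.sum_filter_add_sum_filter_not (Aset T h hmax K)
          (fun t => hmax * (2:ℝ)^(-(K:ℤ)-1) < h t)]
        congr 1
        · unfold Aset Bset
          rw [Finset.filter_filter]
        · unfold Aset
          rw [Finset.filter_filter]
          apply Finset.sum_congr _ (fun x _ => rfl)
          apply Finset.filter_congr
          intro t ht
          have hcast : (-(↑(K+1):ℤ)) = -(K:ℤ)-1 := by push_cast; ring
          rw [hcast]
          constructor
          · rintro ⟨_, h2⟩; exact not_lt.1 h2
          · intro h1
            have h2 : hmax * (2:ℝ)^(-(K:ℤ)-1) ≤ hmax * (2:ℝ)^(-(K:ℤ)) := by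
              apply mul_le_mul_of_nonneg_left _ hmax0.le
              exact zpow_le_zpow_right₀ one_le_two (by omega)
            exact ⟨le_trans h1 h2, not_lt.2 h1⟩
      rw [hsplit]
      have hθ : (0:ℝ) < hmax * (2:ℝ)^(-(K:ℤ)) := by positivity
      have hBbound : ∑ t ∈ Bset T h hmax K, z t / Real.sqrt (∑ s ∈ Finset.Icc 1 t, z s / h s)
          ≤ 2 * Real.sqrt (2 * ∑ t ∈ Bset T h hmax K, h t * z t) := by
        have h1 := lemC T z h hz hh (Bset T h hmax K) (Finset.filter_subset _ _)
          (hmax * (2:ℝ)^(-(K:ℤ))) hθ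
          (fun t ht => (Finset.mem_filter.1 ht).2.1)
        refine h1.trans ?_
        have h2 : hmax * (2:ℝ)^(-(K:ℤ)) * ∑ t ∈ Bset T h hmax K, z t
            ≤ 2 * ∑ t ∈ Bset T h hmax K, h t * z t := by
          rw [Finset.mul_sum, Finset.mul_sum]
          apply Finset.sum_le_sum
          intro t ht
          obtain ⟨htI, h3, h4⟩ := Finset.mem_filter.1 ht
          have hzt : 0 ≤ z t := hznn t htI
          have h5 : hmax * (2:ℝ)^(-(K:ℤ)) ≤ 2 * h t := by
            have : hmax * (2:ℝ)^(-(K:ℤ)) = 2 * (hmax * (2:ℝ)^(-(K:ℤ)-1)) := by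
              rw [show (-(K:ℤ)) = (-(K:ℤ)-1) + 1 by ring, zpow_add₀ (by norm_num : (2:ℝ) ≠ 0)]
              ring
            rw [this]
            linarith
          calc hmax * (2:ℝ)^(-(K:ℤ)) * z t ≤ 2 * h t * z t :=
                mul_le_mul_of_nonneg_right h5 hzt
            _ = 2 * (h t * z t) := by ring
        have h6 : Real.sqrt (hmax * (2:ℝ)^(-(K:ℤ)) * ∑ t ∈ Bset T h hmax K, z t)
            ≤ Real.sqrt (2 * ∑ t ∈ Bset T h hmax K, h t * z t) := Real.sqrt_le_sqrt h2
        linarith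
      rw [Finset.sum_range_succ]
      linarith
  -- tail bound
  have htail : ∑ t ∈ Aset T h hmax J, z t / Real.sqrt (∑ s ∈ Finset.Icc 1 t, z s / h s)
      ≤ 2 * Real.sqrt ((2:ℝ)^(-(J:ℤ)) * (T:ℝ) * hmax * zmax) := by
    have h1 := lemC T z h hz hh (Aset T h hmax J) (Finset.filter_subset _ _)
      (hmax * (2:ℝ)^(-(J:ℤ))) (by positivity) (fun t ht => (Finset.mem_filter.1 ht).2)
    refine h1.trans ?_
    have hsum : ∑ t ∈ Aset T h hmax J, z t ≤ (T:ℝ) * zmax := by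
      calc ∑ t ∈ Aset T h hmax J, z t ≤ ∑ t ∈ Finset.Icc 1 T, z t :=
            Finset.sum_le_sum_of_subset_of_nonneg (Finset.filter_subset _ _)
              (fun t ht _ => hznn t ht)
        _ ≤ (Finset.Icc 1 T).card • zmax := Finset.sum_le_card_nsmul _ _ _
              (fun t ht => hzmax t (hmemIcc t ht).1 (hmemIcc t ht).2)
        _ = (T:ℝ) * zmax := by rw [Nat.card_Icc]; simp [nsmul_eq_mul]
    have h2 : hmax * (2:ℝ)^(-(J:ℤ)) * ∑ t ∈ Aset T h hmax J, z t
        ≤ (2:ℝ)^(-(J:ℤ)) * (T:ℝ) * hmax * zmax := by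
      calc hmax * (2:ℝ)^(-(J:ℤ)) * ∑ t ∈ Aset T h hmax J, z t
          ≤ hmax * (2:ℝ)^(-(J:ℤ)) * ((T:ℝ) * zmax) :=
            mul_le_mul_of_nonneg_left hsum (by positivity)
        _ = (2:ℝ)^(-(J:ℤ)) * (T:ℝ) * hmax * zmax := by ring
    have := Real.sqrt_le_sqrt h2
    linarith
  -- head bound via Cauchy-Schwarz
  have hbnn : ∀ j, 0 ≤ 2 * ∑ t ∈ Bset T h hmax j, h t * z t := by
    intro j
    have : 0 ≤ ∑ t ∈ Bset T h hmax j, h t * z t :=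
      Finset.sum_nonneg (fun t ht => hhznn t (Finset.filter_subset _ _ ht))
    linarith
  have hdisjkey : ∀ i j : ℕ, i < j → Disjoint (Bset T h hmax i) (Bset T h hmax j) := by
    intro i j hij
    rw [Finset.disjoint_left]
    intro t hti htj
    have hti' := (Finset.mem_filter.1 hti).2
    have htj' := (Finset.mem_filter.1 htj).2
    have h2 : (2:ℝ)^(-(j:ℤ)) ≤ 2^(-(i:ℤ)-1) :=
      zpow_le_zpow_right₀ one_le_two (by omega)
    have h3 := mul_le_mul_of_nonneg_left h2 hmax0.le
    have := hti'.2
    have := htj'.1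
    linarith
  have hdisj : (↑(Finset.range J) : Set ℕ).PairwiseDisjoint (Bset T h hmax) := by
    intro i _ j _ hij
    rcases lt_or_gt_of_ne hij with hlt | hgt
    · exact hdisjkey i j hlt
    · exact (hdisjkey j i hgt).symm
  have hsumB : ∑ j ∈ Finset.range J, ∑ t ∈ Bset T h hmax j, h t * z t
      ≤ ∑ t ∈ Finset.Icc 1 T, h t * z t := by
    rw [← Finset.sum_biUnion hdisj]
    apply Finset.sum_le_sum_of_subset_of_nonneg
    · intro t ht
      obtain ⟨j, _, htj⟩ := Finset.mem_biUnion.1 ht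
      exact Finset.filter_subset _ _ htj
    · intro t ht _
      exact hhznn t ht
  have hhead : 2 * (∑ j ∈ Finset.range J, Real.sqrt (2 * ∑ t ∈ Bset T h hmax j, h t * z t))
      ≤ Real.sqrt (8 * (J:ℝ) * ∑ t ∈ Finset.Icc 1 T, h t * z t) := by
    set b : ℕ → ℝ := fun j => 2 * ∑ t ∈ Bset T h hmax j, h t * z t with hb
    have hCS := Finset.sum_mul_sq_le_sq_mul_sq (Finset.range J)
      (fun _ => (1:ℝ)) (fun j => Real.sqrt (b j))
    simp only [one_mul, one_pow, Finset.sum_const, Finset.card_range, nsmul_eq_mul] at hCS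
    have hsq : ∑ j ∈ Finset.range J, Real.sqrt (b j) ^ 2 = ∑ j ∈ Finset.range J, b j :=
      Finset.sum_congr rfl (fun j _ => Real.sq_sqrt (hbnn j))
    rw [hsq] at hCS
    have hsb : ∑ j ∈ Finset.range J, b j ≤ 2 * ∑ t ∈ Finset.Icc 1 T, h t * z t := by
      have : ∑ j ∈ Finset.range J, b j
          = 2 * ∑ j ∈ Finset.range J, ∑ t ∈ Bset T h hmax j, h t * z t := by
        rw [Finset.mul_sum]
      rw [this]
      linarith
    rw [mul_one] at hCS
    have hSnn : 0 ≤ ∑ t ∈ Finset.Icc 1 T, h t * z t := Finset.sum_nonneg hhznn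
    have hfin : (2 * ∑ j ∈ Finset.range J, Real.sqrt (b j)) ^ 2
        ≤ 8 * (J:ℝ) * ∑ t ∈ Finset.Icc 1 T, h t * z t := by
      have e : (2 * ∑ j ∈ Finset.range J, Real.sqrt (b j)) ^ 2
          = 4 * (∑ j ∈ Finset.range J, Real.sqrt (b j)) ^ 2 := by ring
      rw [e]
      have h4 := mul_le_mul_of_nonneg_left hsb (by positivity : (0:ℝ) ≤ 4 * (J:ℝ))
      have h5 := mul_le_mul_of_nonneg_left hCS (by norm_num : (0:ℝ) ≤ 4)
      nlinarith [Nat.cast_nonneg (α := ℝ) J]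
    have h2s : 0 ≤ 2 * ∑ j ∈ Finset.range J, Real.sqrt (b j) := by positivity
    calc 2 * ∑ j ∈ Finset.range J, Real.sqrt (b j)
        = Real.sqrt ((2 * ∑ j ∈ Finset.range J, Real.sqrt (b j)) ^ 2) :=
          (Real.sqrt_sq h2s).symm
      _ ≤ Real.sqrt (8 * (J:ℝ) * ∑ t ∈ Finset.Icc 1 T, h t * z t) :=
          Real.sqrt_le_sqrt hfin
  have := claim J
  linarith
end

section
/- Let α ∈ (0,1), ξ ≥ 1, z_1,...,z_T ≥ 0, and let h_1,...,h_T > 0 be ξ-approximately non-increasing (ξ·h_{t'} ≥ h_t for t' < t). Then G(z_{1:T}, h_{1:T}) ≤ 2·sqrt(ξ)·F*(z_{1:T}, h_{1:T}), where G(z,h) = Σ_{t=1}^T z_t·(Σ_{s=1}^t z_s/h_s)^{-1/2} and F*(z,h) = inf { Σ_{t=1}^T ( z_t/β_t + (β_t − β_{t-1})·h_t ) : 0 < β_1 ≤ ... ≤ β_T, β_0 = 0 }. -/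
private def Henv (h : ℕ → ℝ) : ℕ → ℝ
  | 0 => h 1
  | (t+1) => min (Henv h t) (h (t+1))

private lemma Henv_succ (h : ℕ → ℝ) (t : ℕ) :
    Henv h (t+1) = min (Henv h t) (h (t+1)) := rfl

private lemma Henv_le (h : ℕ → ℝ) (t : ℕ) (ht : 1 ≤ t) : Henv h t ≤ h t := by
  cases t with
  | zero => omega
  | succ k => exact min_le_right _ _

private lemma Henv_mono_succ (h : ℕ → ℝ) (t : ℕ) : Henv h (t+1) ≤ Henv h t :=
  min_le_left _ _

private lemma Henv_exists (h : ℕ → ℝ) : ∀ t, 1 ≤ t → ∃ s, 1 ≤ s ∧ s ≤ t ∧ Henv h t = h s := by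
  intro t ht
  induction t with
  | zero => omega
  | succ k ih =>
    rcases Nat.eq_zero_or_pos k with hk | hk
    · subst hk
      exact ⟨1, le_refl 1, le_refl 1, by simp [Henv_succ, Henv]⟩
    · obtain ⟨s, hs1, hs2, hs3⟩ := ih hk
      rcases le_total (Henv h k) (h (k+1)) with hc | hc
      · exact ⟨s, hs1, le_trans hs2 (Nat.le_succ k), by rw [Henv_succ, min_eq_left hc, hs3]⟩
      · exact ⟨k+1, by omega, le_refl _, by rw [Henv_succ, min_eq_right hc]⟩

private lemma tele1 (f : ℕ → ℝ) : ∀ u : ℕ, ∑ t ∈ Finset.Icc 1 u, (f t - f (t-1)) = f u - f 0 := by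
  intro u
  induction u with
  | zero => simp
  | succ k ih =>
    rw [Finset.sum_Icc_succ_top (by omega)]
    simp only [Nat.add_sub_cancel]
    rw [ih]; ring

private lemma tele2 (f : ℕ → ℝ) (s : ℕ) : ∀ T : ℕ, s ≤ T →
    ∑ u ∈ Finset.Icc s T, (f u - f (u+1)) = f s - f (T+1) := by
  intro T
  induction T with
  | zero =>
    intro hs
    interval_cases s
    simp
  | succ k ih =>
    intro hs
    rcases Nat.lt_or_ge k s with hk | hk
    · have : s = k + 1 := by omega
      subst this
      simp
    · rw [Finset.sum_Icc_succ_top (by omega), ih hk]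
      ring

/-- For ξ-approximately non-increasing `h`, one has `G(z,h) ≤ 2 √ξ F*(z,h)`. -/
theorem stmt19 (T : ℕ) (α ξ : ℝ) (hα : α ∈ Set.Ioo (0 : ℝ) 1) (hξ : 1 ≤ ξ)
    (z h : ℕ → ℝ)
    (hz : ∀ t, 1 ≤ t → t ≤ T → 0 ≤ z t)
    (hh : ∀ t, 1 ≤ t → t ≤ T → 0 < h t)
    (happrox : ∀ t' t, 1 ≤ t' → t' < t → t ≤ T → h t ≤ ξ * h t') :
    (∑ t ∈ Finset.Icc 1 T, z t / Real.sqrt (∑ s ∈ Finset.Icc 1 t, z s / h s))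
      ≤ 2 * Real.sqrt ξ *
        sInf {y : ℝ | ∃ β : ℕ → ℝ, β 0 = 0 ∧
          (∀ t, 1 ≤ t → t ≤ T → 0 < β t) ∧
          (∀ t, 1 ≤ t → t < T → β t ≤ β (t + 1)) ∧
          y = ∑ t ∈ Finset.Icc 1 T, (z t / β t + (β t - β (t - 1)) * h t)} := by
  have hξ0 : (0:ℝ) < ξ := by linarith
  set H : ℕ → ℝ := Henv h with hHdef
  have hHpos : ∀ t, 1 ≤ t → t ≤ T → 0 < H t := by
    intro t h1 h2
    obtain ⟨s, hs1, hs2, hs3⟩ := Henv_exists h t h1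
    rw [hHdef, hs3]
    exact hh s hs1 (le_trans hs2 h2)
  have hHle : ∀ t, 1 ≤ t → H t ≤ h t := fun t ht => Henv_le h t ht
  have hHxi : ∀ t, 1 ≤ t → t ≤ T → h t ≤ ξ * H t := by
    intro t h1 h2
    obtain ⟨s, hs1, hs2, hs3⟩ := Henv_exists h t h1
    rw [hHdef, hs3]
    rcases eq_or_lt_of_le hs2 with h' | h'
    · subst h'
      nlinarith [hh s hs1 h2]
    · exact happrox s t hs1 h' h2
  set S : ℕ → ℝ := fun t => ∑ s ∈ Finset.Icc 1 t, z s / H s with hSdef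
  have hS0 : S 0 = 0 := by simp [hSdef]
  have hterm : ∀ s, 1 ≤ s → s ≤ T → 0 ≤ z s / H s := fun s a b =>
    div_nonneg (hz s a b) (le_of_lt (hHpos s a b))
  have hSnonneg : ∀ t, t ≤ T → 0 ≤ S t := by
    intro t ht
    apply Finset.sum_nonneg
    intro s hs
    rw [Finset.mem_Icc] at hs
    exact hterm s hs.1 (le_trans hs.2 ht)
  have hSstep : ∀ t, 1 ≤ t → S t = S (t-1) + z t / H t := by
    intro t ht
    obtain ⟨k, rfl⟩ : ∃ k, t = k + 1 := ⟨t - 1, by omega⟩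
    simp only [hSdef, Nat.add_sub_cancel]
    exact Finset.sum_Icc_succ_top (by omega) _
  have hSmono : ∀ t, 1 ≤ t → t ≤ T → S (t-1) ≤ S t := by
    intro t h1 h2
    rw [hSstep t h1]
    nlinarith [hterm t h1 h2]
  -- nonemptiness of the infimum set
  have hne : {y : ℝ | ∃ β : ℕ → ℝ, β 0 = 0 ∧
      (∀ t, 1 ≤ t → t ≤ T → 0 < β t) ∧
      (∀ t, 1 ≤ t → t < T → β t ≤ β (t + 1)) ∧
      y = ∑ t ∈ Finset.Icc 1 T, (z t / β t + (β t - β (t - 1)) * h t)}.Nonempty := by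
    refine ⟨_, fun t => (t : ℝ), by simp, ?_, ?_, rfl⟩
    · intro t h1 _
      show (0:ℝ) < (t:ℝ)
      exact_mod_cast h1
    · intro t _ _
      show (t:ℝ) ≤ ((t+1 : ℕ) : ℝ)
      exact_mod_cast Nat.le_succ t
  have h2ξ : (0:ℝ) < 2 * Real.sqrt ξ := by positivity
  have hmain : ∀ y ∈ {y : ℝ | ∃ β : ℕ → ℝ, β 0 = 0 ∧
      (∀ t, 1 ≤ t → t ≤ T → 0 < β t) ∧
      (∀ t, 1 ≤ t → t < T → β t ≤ β (t + 1)) ∧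
      y = ∑ t ∈ Finset.Icc 1 T, (z t / β t + (β t - β (t - 1)) * h t)},
      (∑ t ∈ Finset.Icc 1 T, z t / Real.sqrt (∑ s ∈ Finset.Icc 1 t, z s / h s)) / (2 * Real.sqrt ξ) ≤ y := by
    intro y hy
    obtain ⟨β, hβ0, hβpos, hβstep, rfl⟩ := hy
    rw [div_le_iff₀ h2ξ]
    have hβmono : ∀ s t, 1 ≤ s → s ≤ t → t ≤ T → β s ≤ β t := by
      intro s t hs hst htT
      induction t, hst using Nat.le_induction with
      | base => exact le_refl _
      | succ n hn ih =>
        exact le_trans (ih (by omega)) (hβstep n (by omega) (by omega))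
    -- step 1 : pass to the monotone envelope
    have step1 : ∀ t, 1 ≤ t → t ≤ T →
        z t / Real.sqrt (∑ s ∈ Finset.Icc 1 t, z s / h s)
          ≤ Real.sqrt ξ * (z t / Real.sqrt (S t)) := by
      intro t h1 h2
      have hBle : S t ≤ ξ * (∑ s ∈ Finset.Icc 1 t, z s / h s) := by
        rw [hSdef]
        simp only
        rw [Finset.mul_sum]
        apply Finset.sum_le_sum
        intro s hs
        rw [Finset.mem_Icc] at hs
        have hs1 := hs.1
        have hs2 := le_trans hs.2 h2
        rw [div_le_iff₀ (hHpos s hs1 hs2), mul_comm ξ (z s / h s), mul_assoc,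
          div_mul_eq_mul_div, le_div_iff₀ (hh s hs1 hs2)]
        nlinarith [mul_le_mul_of_nonneg_left (hHxi s hs1 hs2) (hz s hs1 hs2)]
      by_cases hS : S t = 0
      · have hzt : z t = 0 := by
          have h3 : z t / H t ≤ S t := by
            show z t / H t ≤ ∑ s ∈ Finset.Icc 1 t, z s / H s
            exact Finset.single_le_sum (f := fun s => z s / H s)
              (fun s hs => by
                rw [Finset.mem_Icc] at hs
                exact hterm s hs.1 (le_trans hs.2 h2))
              (by rw [Finset.mem_Icc]; omega)
          have h4 := hterm t h1 h2
          have h5 : z t / H t = 0 := le_antisymm (by rw [← hS]; exact h3) h4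
          have h6 := hHpos t h1 h2
          field_simp at h5
          simpa using h5
        rw [hzt]
        simp
      · have hSpos : 0 < S t := lt_of_le_of_ne (hSnonneg t h2) (Ne.symm hS)
        have hApos : 0 < ∑ s ∈ Finset.Icc 1 t, z s / h s := by
          by_contra hc
          push_neg at hc
          nlinarith [mul_nonpos_of_nonneg_of_nonpos hξ0.le hc]
        have hsA : 0 < Real.sqrt (∑ s ∈ Finset.Icc 1 t, z s / h s) := Real.sqrt_pos.mpr hApos
        have hsS : 0 < Real.sqrt (S t) := Real.sqrt_pos.mpr hSpos
        have h3 : Real.sqrt (S t) ≤ Real.sqrt ξ * Real.sqrt (∑ s ∈ Finset.Icc 1 t, z s / h s) := by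
          rw [← Real.sqrt_mul hξ0.le]
          exact Real.sqrt_le_sqrt hBle
        have heq : Real.sqrt ξ * (z t / Real.sqrt (S t)) = Real.sqrt ξ * z t / Real.sqrt (S t) := by
          ring
        rw [heq, div_le_div_iff₀ hsA hsS]
        nlinarith [mul_le_mul_of_nonneg_left h3 (hz t h1 h2)]
    -- step 2 : pointwise bound by increments of sqrt
    have step2 : ∀ t, 1 ≤ t → t ≤ T →
        z t / Real.sqrt (S t) ≤ 2 * (H t * (Real.sqrt (S t) - Real.sqrt (S (t-1)))) := by
      intro t h1 h2
      have hab : Real.sqrt (S (t-1)) ≤ Real.sqrt (S t) := Real.sqrt_le_sqrt (hSmono t h1 h2)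
      have ha0 : 0 ≤ Real.sqrt (S (t-1)) := Real.sqrt_nonneg _
      by_cases hb : Real.sqrt (S t) = 0
      · have ha : Real.sqrt (S (t-1)) = 0 := le_antisymm (hb ▸ hab) ha0
        rw [hb, ha, div_zero]
        norm_num
      · have hbpos : 0 < Real.sqrt (S t) := lt_of_le_of_ne (Real.sqrt_nonneg _) (Ne.symm hb)
        have hb2 : Real.sqrt (S t) ^ 2 = S t := Real.sq_sqrt (hSnonneg t h2)
        have ha2 : Real.sqrt (S (t-1)) ^ 2 = S (t-1) := Real.sq_sqrt (hSnonneg (t-1) (by omega))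
        have hHt := hHpos t h1 h2
        have hzt : z t = H t * (Real.sqrt (S t) ^ 2 - Real.sqrt (S (t-1)) ^ 2) := by
          have hne' : H t ≠ 0 := ne_of_gt hHt
          rw [hb2, ha2, hSstep t h1]
          field_simp
          ring
        rw [div_le_iff₀ hbpos]
        nlinarith [mul_nonneg (mul_nonneg hHt.le (sub_nonneg.2 hab)) (sub_nonneg.2 hab)]
    -- step 3 : the F* lower bound for the monotone envelope
    have step3 : ∑ t ∈ Finset.Icc 1 T, H t * (Real.sqrt (S t) - Real.sqrt (S (t-1)))
        ≤ ∑ t ∈ Finset.Icc 1 T, (z t / β t + (β t - β (t - 1)) * H t) := by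
      set f : ℕ → ℝ := fun u => if u ≤ T then H u else 0 with hfdef
      set w : ℕ → ℝ := fun u => f u - f (u+1) with hwdef
      set d : ℕ → ℝ := fun t => Real.sqrt (S t) - β t with hddef
      have hd0 : d 0 = 0 := by
        show Real.sqrt (S 0) - β 0 = 0
        rw [hS0, hβ0, Real.sqrt_zero, sub_zero]
      have hw_nonneg : ∀ u, 1 ≤ u → u ≤ T → 0 ≤ w u := by
        intro u hu1 hu2
        show 0 ≤ f u - f (u+1)
        by_cases hc : u + 1 ≤ T
        · show 0 ≤ (if u ≤ T then H u else 0) - (if u + 1 ≤ T then H (u+1) else 0)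
          rw [if_pos hu2, if_pos hc]
          have hmono : H (u+1) ≤ H u := Henv_mono_succ h u
          linarith
        · show 0 ≤ (if u ≤ T then H u else 0) - (if u + 1 ≤ T then H (u+1) else 0)
          rw [if_pos hu2, if_neg hc]
          linarith [hHpos u hu1 hu2]
      have hw_sum : ∀ s, 1 ≤ s → s ≤ T → ∑ u ∈ Finset.Icc s T, w u = H s := by
        intro s hs1 hs2
        show ∑ u ∈ Finset.Icc s T, (f u - f (u+1)) = H s
        rw [tele2 f s T hs2]
        have e1 : f s = H s := if_pos hs2
        have e2 : f (T+1) = 0 := if_neg (by omega)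
        rw [e1, e2, sub_zero]
      have hdle : ∀ u, 1 ≤ u → u ≤ T → d u ≤ S u / β u := by
        intro u h1' h2'
        have hβu := hβpos u h1' h2'
        show Real.sqrt (S u) - β u ≤ S u / β u
        rw [le_div_iff₀ hβu]
        nlinarith [sq_nonneg (Real.sqrt (S u) - β u), Real.sq_sqrt (hSnonneg u h2'),
          hSnonneg u h2', sq_nonneg (β u)]
      have core : ∑ t ∈ Finset.Icc 1 T, H t * (d t - d (t-1))
          ≤ ∑ t ∈ Finset.Icc 1 T, z t / β t := by
        have e1 : ∑ t ∈ Finset.Icc 1 T, H t * (d t - d (t-1))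
            = ∑ u ∈ Finset.Icc 1 T, w u * d u := by
          calc ∑ t ∈ Finset.Icc 1 T, H t * (d t - d (t-1))
              = ∑ t ∈ Finset.Icc 1 T, ∑ u ∈ Finset.Icc t T, w u * (d t - d (t-1)) := by
                refine Finset.sum_congr rfl ?_
                intro t ht
                rw [Finset.mem_Icc] at ht
                rw [← Finset.sum_mul, hw_sum t ht.1 ht.2]
            _ = ∑ u ∈ Finset.Icc 1 T, ∑ t ∈ Finset.Icc 1 u, w u * (d t - d (t-1)) := by
                refine Finset.sum_comm' ?_
                intro x y
                simp only [Finset.mem_Icc]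
                omega
            _ = ∑ u ∈ Finset.Icc 1 T, w u * d u := by
                refine Finset.sum_congr rfl ?_
                intro u hu
                rw [← Finset.mul_sum, tele1 d u, hd0, sub_zero]
        rw [e1]
        calc ∑ u ∈ Finset.Icc 1 T, w u * d u
            ≤ ∑ u ∈ Finset.Icc 1 T, w u * (S u / β u) := by
              apply Finset.sum_le_sum
              intro u hu
              rw [Finset.mem_Icc] at hu
              exact mul_le_mul_of_nonneg_left (hdle u hu.1 hu.2) (hw_nonneg u hu.1 hu.2)
          _ = ∑ u ∈ Finset.Icc 1 T, ∑ s ∈ Finset.Icc 1 u, (w u / β u) * (z s / H s) := by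
              refine Finset.sum_congr rfl ?_
              intro u hu
              have e2 : w u * (S u / β u) = (w u / β u) * S u := by ring
              rw [e2]
              show (w u / β u) * (∑ s ∈ Finset.Icc 1 u, z s / H s) = _
              rw [Finset.mul_sum]
          _ = ∑ s ∈ Finset.Icc 1 T, ∑ u ∈ Finset.Icc s T, (w u / β u) * (z s / H s) := by
              refine Finset.sum_comm' ?_
              intro x y
              simp only [Finset.mem_Icc]
              omega
          _ ≤ ∑ s ∈ Finset.Icc 1 T, ∑ u ∈ Finset.Icc s T, (w u / β s) * (z s / H s) := by
              apply Finset.sum_le_sum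
              intro s hs
              rw [Finset.mem_Icc] at hs
              apply Finset.sum_le_sum
              intro u hu
              rw [Finset.mem_Icc] at hu
              apply mul_le_mul_of_nonneg_right _ (hterm s hs.1 hs.2)
              exact div_le_div_of_nonneg_left (hw_nonneg u (le_trans hs.1 hu.1) hu.2)
                (hβpos s hs.1 hs.2) (hβmono s u hs.1 hu.1 hu.2)
          _ = ∑ s ∈ Finset.Icc 1 T, z s / β s := by
              refine Finset.sum_congr rfl ?_
              intro s hs
              rw [Finset.mem_Icc] at hs
              have e2 : ∀ u, (w u / β s) * (z s / H s) = w u * ((z s / H s) / β s) := by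
                intro u; ring
              calc ∑ u ∈ Finset.Icc s T, (w u / β s) * (z s / H s)
                  = (∑ u ∈ Finset.Icc s T, w u) * ((z s / H s) / β s) := by
                    rw [Finset.sum_mul]
                    exact Finset.sum_congr rfl fun u _ => e2 u
                _ = H s * ((z s / H s) / β s) := by rw [hw_sum s hs.1 hs.2]
                _ = z s / β s := by
                    have h3 : H s ≠ 0 := ne_of_gt (hHpos s hs.1 hs.2)
                    field_simp
      have e3 : ∀ t ∈ Finset.Icc 1 T, H t * (Real.sqrt (S t) - Real.sqrt (S (t-1)))
          = H t * (d t - d (t-1)) + (β t - β (t-1)) * H t := by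
        intro t ht
        show H t * (Real.sqrt (S t) - Real.sqrt (S (t-1)))
          = H t * ((Real.sqrt (S t) - β t) - (Real.sqrt (S (t-1)) - β (t-1)))
            + (β t - β (t-1)) * H t
        ring
      rw [Finset.sum_congr rfl e3, Finset.sum_add_distrib, Finset.sum_add_distrib]
      exact add_le_add_left core _
    calc ∑ t ∈ Finset.Icc 1 T, z t / Real.sqrt (∑ s ∈ Finset.Icc 1 t, z s / h s)
        ≤ ∑ t ∈ Finset.Icc 1 T, Real.sqrt ξ * (z t / Real.sqrt (S t)) := by
          apply Finset.sum_le_sum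
          intro t ht
          rw [Finset.mem_Icc] at ht
          exact step1 t ht.1 ht.2
      _ = Real.sqrt ξ * ∑ t ∈ Finset.Icc 1 T, z t / Real.sqrt (S t) := by
          rw [Finset.mul_sum]
      _ ≤ Real.sqrt ξ * ∑ t ∈ Finset.Icc 1 T,
            2 * (H t * (Real.sqrt (S t) - Real.sqrt (S (t-1)))) := by
          apply mul_le_mul_of_nonneg_left _ (Real.sqrt_nonneg ξ)
          apply Finset.sum_le_sum
          intro t ht
          rw [Finset.mem_Icc] at ht
          exact step2 t ht.1 ht.2
      _ = Real.sqrt ξ * (2 * ∑ t ∈ Finset.Icc 1 T,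
            H t * (Real.sqrt (S t) - Real.sqrt (S (t-1)))) := by
          simp only [Finset.mul_sum]
      _ ≤ Real.sqrt ξ * (2 * ∑ t ∈ Finset.Icc 1 T,
            (z t / β t + (β t - β (t - 1)) * H t)) := by
          apply mul_le_mul_of_nonneg_left _ (Real.sqrt_nonneg ξ)
          linarith [step3]
      _ ≤ Real.sqrt ξ * (2 * ∑ t ∈ Finset.Icc 1 T,
            (z t / β t + (β t - β (t - 1)) * h t)) := by
          apply mul_le_mul_of_nonneg_left _ (Real.sqrt_nonneg ξ)
          have hsum : ∑ t ∈ Finset.Icc 1 T, (z t / β t + (β t - β (t - 1)) * H t)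
              ≤ ∑ t ∈ Finset.Icc 1 T, (z t / β t + (β t - β (t - 1)) * h t) := by
            apply Finset.sum_le_sum
            intro t ht
            rw [Finset.mem_Icc] at ht
            have hβd : 0 ≤ β t - β (t - 1) := by
              have hle' : β (t - 1) ≤ β t := by
                rcases Nat.eq_or_lt_of_le ht.1 with h' | h'
                · have ht0 : t - 1 = 0 := by omega
                  rw [ht0, hβ0]
                  exact (hβpos t ht.1 ht.2).le
                · exact hβmono (t-1) t (by omega) (by omega) ht.2
              linarith
            have hm := mul_le_mul_of_nonneg_left (hHle t ht.1) hβd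
            linarith
          linarith
      _ = (∑ t ∈ Finset.Icc 1 T, (z t / β t + (β t - β (t - 1)) * h t)) * (2 * Real.sqrt ξ) := by
          ring
  have hfinal := le_csInf hne hmain
  rw [div_le_iff₀ h2ξ] at hfinal
  linarith [hfinal]
end
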